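/- arXiv:1902.09989 — 10 statements merged into one kernel-verified Lean document; each statement's English description precedes it below -/
import Mathlib

section
/- Every complex linear subspace of the algebra of complex-valued functions on a finite set {1,…,n} that is closed under pointwise multiplication is also closed under pointwise complex conjugation. -/
noncomputable section

/-- Every complex linear subspace of `ℓ∞ₙ = (Fin n → ℂ)` that is closed under pointwise
multiplication is also closed under pointwise complex conjugation. -/
theorem subalgebra_linf_selfAdjoint (n : ℕ) (S : Set (Fin n → ℂ))
    (h0 : (0 : Fin n → ℂ) ∈ S)
    (hadd : ∀ f ∈ S, ∀ g ∈ S, f + g ∈ S)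
    (hsmul : ∀ (c : ℂ), ∀ f ∈ S, c • f ∈ S)
    (hmul : ∀ f ∈ S, ∀ g ∈ S, f * g ∈ S) :
    ∀ f ∈ S, (fun i => (starRingEnd ℂ) (f i)) ∈ S := by
  intro f hf
  have hpow : ∀ k : ℕ, f ^ (k + 1) ∈ S := by
    intro k
    induction k with
    | zero => simpa using hf
    | succ k ih => rw [pow_succ]; exact hmul _ ih _ hf
  have hsum : ∀ (t : Finset ℕ) (g : ℕ → (Fin n → ℂ)),
      (∀ k ∈ t, g k ∈ S) → (∑ k ∈ t, g k) ∈ S := by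
    intro t
    induction t using Finset.induction with
    | empty => intro g _; simpa using h0
    | insert _ _ hx ih =>
      intro g hg
      rw [Finset.sum_insert hx]
      exact hadd _ (hg _ (Finset.mem_insert_self _ _)) _
        (ih g fun k hk => hg k (Finset.mem_insert_of_mem hk))
  set s : Finset ℂ := insert 0 (Finset.image f Finset.univ) with hs
  set p : Polynomial ℂ := Lagrange.interpolate s id (fun z => (starRingEnd ℂ) z) with hp
  have hinj : Set.InjOn id (s : Set ℂ) := fun a _ b _ h => h
  have heval : ∀ z ∈ s, p.eval z = (starRingEnd ℂ) z := by
    intro z hz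
    exact Lagrange.eval_interpolate_at_node (fun z => (starRingEnd ℂ) z) hinj hz
  have hp0 : p.coeff 0 = 0 := by
    have h := heval 0 (Finset.mem_insert_self _ _)
    simpa [Polynomial.coeff_zero_eq_eval_zero] using h
  have hmem : (fun i => p.eval (f i)) ∈ S := by
    have hrw : (fun i => p.eval (f i)) = ∑ k ∈ p.support, p.coeff k • f ^ k := by
      funext i
      rw [Polynomial.eval_eq_sum, Polynomial.sum, Finset.sum_apply]
      simp [mul_comm]
    rw [hrw]
    apply hsum
    intro k hk
    have hk1 : k ≠ 0 := by rintro rfl; exact (Polynomial.mem_support_iff.mp hk) hp0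
    obtain ⟨m, rfl⟩ := Nat.exists_eq_succ_of_ne_zero hk1
    exact hsmul _ _ (hpow m)
  have hkey : (fun i => (starRingEnd ℂ) (f i)) = fun i => p.eval (f i) := by
    funext i
    exact (heval (f i) (Finset.mem_insert_of_mem
      (Finset.mem_image_of_mem f (Finset.mem_univ i)))).symm
  rw [hkey]
  exact hmem
end
end

section
/- Let 𝒜 ⊆ Mₙ(ℂ) be an operator algebra. The following are equivalent: (i) 𝒜 is antisymmetric; (ii) every self-adjoint element of 𝒜 is a complex scalar multiple of the identity matrix I; (iii) the only matrices P ∈ 𝒜 with P = P² = P* are P = 0 and possibly P = I; (iv) every unitary element of 𝒜 + ℂ·I is a complex scalar multiple of I; (v) every normal element of 𝒜 (every A ∈ 𝒜 with AA* = A*A) is a complex scalar multiple of I. -/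
open Matrix Polynomial

noncomputable section

abbrev Mat (n : ℕ) := Matrix (Fin n) (Fin n) ℂ

/-- An operator algebra: a complex linear subspace of matrices closed under multiplication. -/
def IsOpAlg {n : ℕ} (S : Set (Mat n)) : Prop :=
  0 ∈ S ∧ (∀ A ∈ S, ∀ B ∈ S, A + B ∈ S) ∧ (∀ (c : ℂ), ∀ A ∈ S, c • A ∈ S) ∧
    (∀ A ∈ S, ∀ B ∈ S, A * B ∈ S)

/-- Antisymmetry: `𝒜 ∩ 𝒜* ⊆ ℂ·I`. -/
def Antisym {n : ℕ} (S : Set (Mat n)) : Prop :=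
  ∀ A ∈ S, Aᴴ ∈ S → ∃ c : ℂ, A = c • (1 : Mat n)

namespace AntisymAux

variable {n : ℕ} {S : Set (Mat n)}

lemma pow_mem (hS : IsOpAlg S) {A : Mat n} (hA : A ∈ S) : ∀ k : ℕ, A ^ (k + 1) ∈ S
  | 0 => by simpa using hA
  | (k + 1) => by
      have := hS.2.2.2 _ (pow_mem hS hA k) A hA
      simpa [pow_succ] using this

lemma aeval_mem (hS : IsOpAlg S) {A : Mat n} (hA : A ∈ S) {p : ℂ[X]} (hp : p.coeff 0 = 0) :
    Polynomial.aeval A p ∈ S := by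
  rw [Polynomial.aeval_eq_sum_range]
  apply Finset.sum_induction _ (· ∈ S) (fun a b ha hb => hS.2.1 a ha b hb) hS.1
  intro i _
  rcases Nat.eq_zero_or_pos i with h0 | h1
  · subst h0; simpa [hp] using hS.1
  · obtain ⟨k, rfl⟩ := Nat.exists_eq_add_of_lt h1
    exact hS.2.2.1 _ _ (by simpa using pow_mem hS hA k)

lemma scalar_proj {P : Mat n} (c : ℂ) (hP : P = c • (1 : Mat n)) (hPP : P * P = P) :
    P = 0 ∨ P = 1 := by
  by_cases h1 : (1 : Mat n) = 0
  · left; rw [hP, h1, smul_zero]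
  · have : (c * c) • (1 : Mat n) = c • (1 : Mat n) := by
      calc (c * c) • (1 : Mat n) = (c • (1 : Mat n)) * (c • (1 : Mat n)) := by
            simp [smul_smul]
        _ = c • (1 : Mat n) := by rw [← hP, hPP, hP]
    have hc : c * c = c := by
      have := sub_eq_zero.mpr this
      rw [← sub_smul] at this
      rcases smul_eq_zero.mp this with h | h
      · exact sub_eq_zero.mp h
      · exact absurd h h1
    rcases mul_eq_zero.mp (show c * (c - 1) = 0 from by linear_combination hc) with h | h
    · left; rw [hP, h, zero_smul]
    · right; rw [hP, sub_eq_zero.mp h, one_smul]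

lemma teq_mul {n : ℕ} (M N : Mat n) :
    Matrix.toEuclideanLin (M * N) = Matrix.toEuclideanLin M * Matrix.toEuclideanLin N := by
  apply LinearMap.ext; intro v
  rw [Module.End.mul_apply]
  simp [Matrix.toEuclideanLin_apply, Matrix.mulVec_mulVec]

lemma teq_one {n : ℕ} : Matrix.toEuclideanLin (1 : Mat n) = 1 := by
  apply LinearMap.ext; intro v
  simp [Matrix.toEuclideanLin_apply, Matrix.one_mulVec]

lemma aeval_apply_eig {n : ℕ} (A : Mat n) (p : ℂ[X]) (μ : ℂ) (v : EuclideanSpace ℂ (Fin n))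
    (hv : Matrix.toEuclideanLin A v = μ • v) :
    Matrix.toEuclideanLin (Polynomial.aeval A p) v = p.eval μ • v := by
  induction p using Polynomial.induction_on' with
  | add p q hp hq => simp [map_add, LinearMap.add_apply, hp, hq, add_smul]
  | monomial k c =>
      have hpow : ∀ m : ℕ, Matrix.toEuclideanLin (A ^ m) v = (μ ^ m) • v := by
        intro m; induction m with
        | zero => simp [teq_one]
        | succ m ih =>
            rw [pow_succ, teq_mul, Module.End.mul_apply, hv, _root_.map_smul, ih, smul_smul,
              pow_succ]
            rw [mul_comm]
      rw [Polynomial.aeval_monomial, ← Algebra.smul_def, _root_.map_smul, LinearMap.smul_apply,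
        hpow, Polynomial.eval_monomial, smul_smul]

set_option maxHeartbeats 1600000 in
/-- The hard implication: (iii) → (v). -/
lemma normal_scalar (hS : IsOpAlg S)
    (h3 : ∀ P ∈ S, P * P = P → Pᴴ = P → P = 0 ∨ P = 1)
    {A : Mat n} (hA : A ∈ S) (hnorm : A * Aᴴ = Aᴴ * A) :
    ∃ c : ℂ, A = c • (1 : Mat n) := by
  classical
  set T := Matrix.toEuclideanLin A with hT
  have hadjT : Matrix.toEuclideanLin Aᴴ = LinearMap.adjoint T :=
    Matrix.toEuclideanLin_conjTranspose_eq_adjoint A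
  -- the adjoint acts on eigenvectors by the conjugate eigenvalue
  have hadj_eig : ∀ (μ : ℂ) (v : EuclideanSpace ℂ (Fin n)), T v = μ • v →
      (LinearMap.adjoint T) v = (starRingEnd ℂ μ) • v := by
    intro μ v hv
    set N : Mat n := A - μ • 1 with hNdef
    have hNH : Nᴴ = Aᴴ - (starRingEnd ℂ μ) • 1 := by
      simp [hNdef, conjTranspose_sub, conjTranspose_smul, conjTranspose_one]
    have hNnorm : N * Nᴴ = Nᴴ * N := by
      rw [hNH, hNdef]
      simp only [sub_mul, mul_sub, smul_mul_assoc, mul_smul_comm, mul_one, one_mul, smul_smul,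
        hnorm]
      module
    set NT := Matrix.toEuclideanLin N with hNT
    have hNadj : Matrix.toEuclideanLin Nᴴ = LinearMap.adjoint NT :=
      Matrix.toEuclideanLin_conjTranspose_eq_adjoint N
    have hcomm : NT * LinearMap.adjoint NT = LinearMap.adjoint NT * NT := by
      rw [← hNadj, ← teq_mul, ← teq_mul, hNnorm]
    have hNTeq : NT = T - μ • 1 := by
      rw [hNT, hNdef, map_sub, _root_.map_smul, teq_one]
    have hNv : NT v = 0 := by
      rw [hNTeq]
      simp [LinearMap.sub_apply, hv]
    have hinner : (inner ℂ ((LinearMap.adjoint NT) v) ((LinearMap.adjoint NT) v)) = 0 := by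
      rw [LinearMap.adjoint_inner_left]
      have hswap : NT ((LinearMap.adjoint NT) v) = (LinearMap.adjoint NT) (NT v) := by
        have h := congrArg (fun f => f v) hcomm
        simpa [Module.End.mul_apply] using h
      rw [hswap, hNv, map_zero, inner_zero_right]
    have hNAv : (LinearMap.adjoint NT) v = 0 := inner_self_eq_zero.mp hinner
    have hNAeq : LinearMap.adjoint NT = LinearMap.adjoint T - (starRingEnd ℂ μ) • 1 := by
      rw [← hNadj, hNH, map_sub, _root_.map_smul, teq_one, hadjT]
    rw [hNAeq] at hNAv
    simp only [LinearMap.sub_apply, LinearMap.smul_apply, Module.End.one_apply] at hNAv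
    exact sub_eq_zero.mp hNAv
  -- orthogonality of distinct eigenspaces
  have horth : ∀ (μ ν : ℂ) (v w : EuclideanSpace ℂ (Fin n)), T v = μ • v → T w = ν • w →
      μ ≠ ν → inner ℂ v w = 0 := by
    intro μ ν v w hv hw hmn
    have h1 : inner ℂ v (T w) = ν * inner ℂ v w := by rw [hw, inner_smul_right]
    have h2 : inner ℂ v (T w) = μ * inner ℂ v w := by
      rw [← LinearMap.adjoint_inner_left, hadj_eig μ v hv, inner_smul_left]
      simp
    by_contra hzero
    exact hmn (mul_right_cancel₀ hzero (h2.symm.trans h1))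
  -- eigenspaces of T span everything
  have hspan : (⨆ μ : ℂ, Module.End.eigenspace T μ) = ⊤ := by
    set H : Mat n := A + Aᴴ with hHdef
    set K : Mat n := Complex.I • (A - Aᴴ) with hKdef
    have hHh : H.IsHermitian := by
      simp [Matrix.IsHermitian, hHdef, conjTranspose_add, add_comm]
    have hKh : K.IsHermitian := by
      simp only [Matrix.IsHermitian, hKdef, conjTranspose_smul, conjTranspose_sub,
        Complex.star_def, Complex.conj_I, conjTranspose_conjTranspose]
      rw [neg_smul, ← smul_neg, neg_sub]
    have hHs : (Matrix.toEuclideanLin H).IsSymmetric :=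
      Matrix.isHermitian_iff_isSymmetric.mp hHh
    have hKs : (Matrix.toEuclideanLin K).IsSymmetric :=
      Matrix.isHermitian_iff_isSymmetric.mp hKh
    have hHKc : Commute (Matrix.toEuclideanLin H) (Matrix.toEuclideanLin K) := by
      have hmats : H * K = K * H := by
        rw [hHdef, hKdef]
        rw [Matrix.mul_smul, Matrix.smul_mul]
        congr 1
        simp only [mul_sub, sub_mul, mul_add, add_mul, hnorm]
        abel
      show _ * _ = _ * _
      rw [← teq_mul, ← teq_mul, hmats]
    have htop := hHs.iSup_iSup_eigenspace_inf_eigenspace_eq_top_of_commute hKs hHKc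
    rw [eq_top_iff, ← htop]
    refine iSup_le fun α => iSup_le fun γ => ?_
    refine le_trans ?_ (le_iSup _ ((2⁻¹ : ℂ) * (α - Complex.I * γ)))
    intro v hv
    simp only [Submodule.mem_inf] at hv
    obtain ⟨hv1, hv2⟩ := hv
    rw [Module.End.mem_eigenspace_iff] at hv1 hv2
    rw [Module.End.mem_eigenspace_iff]
    have hIK : ((2⁻¹ : ℂ) * Complex.I) • K = (-(2⁻¹ : ℂ)) • (A - Aᴴ) := by
      rw [hKdef, smul_smul]
      congr 1
      rw [mul_assoc, Complex.I_mul_I]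
      ring
    have hAeq : A = (2⁻¹ : ℂ) • H - ((2⁻¹ : ℂ) * Complex.I) • K := by
      rw [hIK, hHdef]
      module
    rw [hT]
    conv_lhs => rw [hAeq]
    rw [map_sub, _root_.map_smul, _root_.map_smul, LinearMap.sub_apply, LinearMap.smul_apply,
      LinearMap.smul_apply, hv1, hv2]
    module
  -- dichotomy on the number of eigenvalues
  by_cases hone : ∀ μ ν : ℂ, Module.End.HasEigenvalue T μ → Module.End.HasEigenvalue T ν → μ = ν
  · by_cases hex : ∃ μ : ℂ, Module.End.HasEigenvalue T μ
    · obtain ⟨lam, hlam⟩ := hex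
      refine ⟨lam, ?_⟩
      have hall : ∀ v, T v = lam • v := by
        intro v
        have hv : v ∈ (⨆ μ : ℂ, Module.End.eigenspace T μ) := by
          rw [hspan]; trivial
        refine Submodule.iSup_induction (motive := fun w => T w = lam • w) _ hv ?_ (by simp) ?_
        · intro μ w hw
          by_cases hw0 : w = 0
          · simp [hw0]
          · have hev : Module.End.HasEigenvalue T μ :=
              Module.End.hasEigenvalue_of_hasEigenvector ⟨hw, hw0⟩
            have hml : μ = lam := hone μ lam hev hlam
            rw [Module.End.mem_eigenspace_iff] at hw
            rw [hw, hml]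
        · intro x y hx hy
          rw [map_add, hx, hy, smul_add]
      have : Matrix.toEuclideanLin A = Matrix.toEuclideanLin (lam • (1 : Mat n)) := by
        apply LinearMap.ext; intro v
        rw [_root_.map_smul, teq_one]
        exact hall v
      exact Matrix.toEuclideanLin.injective this
    · push_neg at hex
      have hbot : (⊤ : Submodule ℂ (EuclideanSpace ℂ (Fin n))) = ⊥ := by
        rw [← hspan]
        exact iSup_eq_bot.mpr fun μ => not_not.mp (hex μ)
      refine ⟨0, ?_⟩
      have : Matrix.toEuclideanLin A = Matrix.toEuclideanLin ((0 : ℂ) • (1 : Mat n)) := by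
        apply LinearMap.ext; intro v
        have hv0 : v = 0 := by
          have hv : v ∈ (⊤ : Submodule ℂ (EuclideanSpace ℂ (Fin n))) := trivial
          rw [hbot] at hv
          simpa using hv
        simp [hv0]
      exact Matrix.toEuclideanLin.injective this
  · exfalso
    push_neg at hone
    obtain ⟨μ₁, μ₂, h1, h2, hne⟩ := hone
    obtain ⟨lam, mu, hlam0, hlamu, hlam, hmu⟩ :
        ∃ lam mu : ℂ, lam ≠ 0 ∧ lam ≠ mu ∧
          Module.End.HasEigenvalue T lam ∧ Module.End.HasEigenvalue T mu := by
      by_cases h0 : μ₁ = 0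
      · exact ⟨μ₂, μ₁, by rw [h0] at hne; exact fun h => hne h.symm, Ne.symm hne, h2, h1⟩
      · exact ⟨μ₁, μ₂, h0, hne, h1, h2⟩
    set s : Finset ℂ := insert 0 (Module.End.finite_spectrum T).toFinset with hs
    have hmem_s : ∀ μ : ℂ, Module.End.HasEigenvalue T μ → μ ∈ s := by
      intro μ h
      exact Finset.mem_insert_of_mem
        ((Set.Finite.mem_toFinset _).mpr (Module.End.hasEigenvalue_iff_mem_spectrum.mp h))
    set p : ℂ[X] := Lagrange.interpolate s id (fun x => if x = lam then 1 else 0) with hpdef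
    have hinj : Set.InjOn id (s : Set ℂ) := Function.injective_id.injOn
    have hpeval : ∀ x ∈ s, p.eval x = if x = lam then 1 else 0 := by
      intro x hx
      exact Lagrange.eval_interpolate_at_node _ hinj hx
    have hp0 : p.coeff 0 = 0 := by
      rw [Polynomial.coeff_zero_eq_eval_zero, hpeval 0 (Finset.mem_insert_self _ _)]
      exact if_neg fun h => hlam0 h.symm
    set P : Mat n := Polynomial.aeval A p with hPdef
    have hPS : P ∈ S := aeval_mem hS hA hp0
    have hreal : ∀ μ : ℂ, Module.End.HasEigenvalue T μ → p.eval μ = 0 ∨ p.eval μ = 1 := by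
      intro μ h
      rw [hpeval μ (hmem_s μ h)]
      by_cases hml : μ = lam
      · right; rw [if_pos hml]
      · left; rw [if_neg hml]
    -- P is idempotent
    have hPP : P * P = P := by
      apply Matrix.toEuclideanLin.injective
      rw [teq_mul]
      apply LinearMap.ext; intro v
      rw [Module.End.mul_apply]
      have hv : v ∈ (⨆ μ : ℂ, Module.End.eigenspace T μ) := by rw [hspan]; trivial
      refine Submodule.iSup_induction
        (motive := fun w => Matrix.toEuclideanLin P (Matrix.toEuclideanLin P w) =
          Matrix.toEuclideanLin P w) _ hv ?_ (by simp) ?_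
      · intro μ w hw
        by_cases hw0 : w = 0
        · simp [hw0]
        · rw [Module.End.mem_eigenspace_iff] at hw
          have he := aeval_apply_eig A p μ w hw
          rw [← hPdef] at he
          rw [he, _root_.map_smul, he, smul_smul]
          rcases hreal μ (Module.End.hasEigenvalue_of_hasEigenvector
            ⟨Module.End.mem_eigenspace_iff.mpr hw, hw0⟩) with h | h <;> rw [h] <;> simp
      · intro x y hx hy
        rw [map_add, map_add, hx, hy]
    -- P is hermitian
    have hsym : (Matrix.toEuclideanLin P).IsSymmetric := by
      have main : ∀ x y : EuclideanSpace ℂ (Fin n),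
          inner ℂ (Matrix.toEuclideanLin P x) y = inner ℂ x (Matrix.toEuclideanLin P y) := by
        intro x
        have hx : x ∈ (⨆ μ : ℂ, Module.End.eigenspace T μ) := by rw [hspan]; trivial
        refine Submodule.iSup_induction
          (motive := fun x => ∀ y : EuclideanSpace ℂ (Fin n),
            inner ℂ (Matrix.toEuclideanLin P x) y = inner ℂ x (Matrix.toEuclideanLin P y))
          _ hx ?_ (by simp) ?_
        · intro μ w hw y
          have hy : y ∈ (⨆ μ : ℂ, Module.End.eigenspace T μ) := by rw [hspan]; trivial
          refine Submodule.iSup_induction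
            (motive := fun y => inner ℂ (Matrix.toEuclideanLin P w) y =
              inner ℂ w (Matrix.toEuclideanLin P y)) _ hy ?_ (by simp) ?_
          · intro ν u hu
            by_cases hw0 : w = 0
            · simp [hw0]
            by_cases hu0 : u = 0
            · simp [hu0]
            rw [Module.End.mem_eigenspace_iff] at hw hu
            have hew := aeval_apply_eig A p μ w hw
            have heu := aeval_apply_eig A p ν u hu
            rw [← hPdef] at hew heu
            rw [hew, heu, inner_smul_left, inner_smul_right]
            by_cases hmn : μ = ν
            · subst hmn
              rcases hreal μ (Module.End.hasEigenvalue_of_hasEigenvector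
                ⟨Module.End.mem_eigenspace_iff.mpr hw, hw0⟩) with h | h <;> rw [h] <;> simp
            · rw [horth μ ν w u hw hu hmn]
              simp
          · intro a b ha hb
            rw [inner_add_right, map_add, inner_add_right, ha, hb]
        · intro a b ha hb y
          rw [map_add, inner_add_left, inner_add_left, ha y, hb y]
      exact fun x y => main x y
    have hPh : Pᴴ = P := Matrix.isHermitian_iff_isSymmetric.mpr hsym
    -- P is neither 0 nor 1
    obtain ⟨v, hveig, hvne⟩ := hlam.exists_hasEigenvector
    obtain ⟨w, hweig, hwne⟩ := hmu.exists_hasEigenvector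
    rw [Module.End.mem_eigenspace_iff] at hveig hweig
    have hPv : Matrix.toEuclideanLin P v = v := by
      have := aeval_apply_eig A p lam v hveig
      rw [← hPdef] at this
      rw [this, hpeval lam (hmem_s lam hlam), if_pos rfl, one_smul]
    have hPw : Matrix.toEuclideanLin P w = 0 := by
      have := aeval_apply_eig A p mu w hweig
      rw [← hPdef] at this
      rw [this, hpeval mu (hmem_s mu hmu), if_neg (fun h => hlamu h.symm), zero_smul]
    rcases h3 P hPS hPP hPh with h | h
    · rw [h] at hPv
      simp at hPv
      exact hvne hPv.symm
    · rw [h, teq_one] at hPw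
      exact hwne (by simpa using hPw)

end AntisymAux

open AntisymAux in
/-- For an operator algebra `𝒜 ⊆ Mₙ(ℂ)` the following are equivalent:
(i) `𝒜` is antisymmetric; (ii) every self-adjoint element of `𝒜` is a scalar multiple of `I`;
(iii) the only orthogonal projections in `𝒜` are `0` and possibly `I`; (iv) every unitary
element of `𝒜 + ℂ·I` is a scalar multiple of `I`; (v) every normal element of `𝒜` is a
scalar multiple of `I`. -/
theorem antisym_tfae_finiteDim (n : ℕ) (S : Set (Mat n)) (hS : IsOpAlg S) :
    List.TFAE
      [ Antisym S,
        ∀ A ∈ S, Aᴴ = A → ∃ c : ℂ, A = c • (1 : Mat n),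
        ∀ P ∈ S, P * P = P → Pᴴ = P → P = 0 ∨ P = 1,
        ∀ B : Mat n, (∃ A ∈ S, ∃ c : ℂ, B = A + c • (1 : Mat n)) →
          Bᴴ * B = 1 → B * Bᴴ = 1 → ∃ c : ℂ, B = c • (1 : Mat n),
        ∀ A ∈ S, A * Aᴴ = Aᴴ * A → ∃ c : ℂ, A = c • (1 : Mat n) ] := by
  tfae_have 1 → 2 := by
    intro h1 A hA hAH
    exact h1 A hA (hAH.symm ▸ hA)
  tfae_have 2 → 1 := by
    intro h2 A hA hAH
    -- B = A + Aᴴ, C = I•(A - Aᴴ) are hermitian elements of S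
    have hB : A + Aᴴ ∈ S := hS.2.1 A hA _ hAH
    have hBh : (A + Aᴴ)ᴴ = A + Aᴴ := by
      simp [conjTranspose_add, add_comm]
    have hCmem : Complex.I • (A - Aᴴ) ∈ S := by
      have : A - Aᴴ ∈ S := by
        have := hS.2.1 A hA _ (hS.2.2.1 (-1) _ hAH)
        simpa [sub_eq_add_neg] using this
      exact hS.2.2.1 _ _ this
    have hCh : (Complex.I • (A - Aᴴ))ᴴ = Complex.I • (A - Aᴴ) := by
      simp only [conjTranspose_smul, conjTranspose_sub, Complex.star_def, Complex.conj_I,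
        conjTranspose_conjTranspose]
      rw [neg_smul, ← smul_neg, neg_sub]
    obtain ⟨a, ha⟩ := h2 _ hB hBh
    obtain ⟨b, hb⟩ := h2 _ hCmem hCh
    refine ⟨(a - Complex.I * b) / 2, ?_⟩
    have hsub : A - Aᴴ = (-(Complex.I * b)) • (1 : Mat n) := by
      have h := congrArg (fun M => (-Complex.I) • M) hb
      simp only [smul_smul] at h
      rw [show (-Complex.I) * Complex.I = 1 from by
            rw [neg_mul, Complex.I_mul_I, neg_neg], one_smul, neg_mul] at h
      exact h
    have h2A : (2 : ℂ) • A = (a - Complex.I * b) • (1 : Mat n) := by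
      have hsplit : (2 : ℂ) • A = (A + Aᴴ) + (A - Aᴴ) := by module
      rw [hsplit, ha, hsub]
      module
    calc A = (2⁻¹ : ℂ) • ((2 : ℂ) • A) := by module
      _ = (2⁻¹ : ℂ) • ((a - Complex.I * b) • (1 : Mat n)) := by rw [h2A]
      _ = ((a - Complex.I * b) / 2) • (1 : Mat n) := by module
  tfae_have 2 → 3 := by
    intro h2 P hP hPP hPh
    obtain ⟨c, hc⟩ := h2 P hP hPh
    exact scalar_proj c hc hPP
  tfae_have 3 → 5 := fun h3 A hA hnorm => normal_scalar hS h3 hA hnorm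
  tfae_have 5 → 2 := by
    intro h5 A hA hAH
    exact h5 A hA (by rw [hAH])
  tfae_have 5 → 4 := by
    rintro h5 B ⟨A, hA, c, rfl⟩ hU hV
    have hBH : (A + c • (1 : Mat n))ᴴ = Aᴴ + (starRingEnd ℂ c) • (1 : Mat n) := by
      simp [conjTranspose_add, conjTranspose_smul, conjTranspose_one]
    rw [hBH] at hU hV
    have hnorm : A * Aᴴ = Aᴴ * A := by
      have key : Aᴴ * A - A * Aᴴ =
          (Aᴴ + (starRingEnd ℂ c) • (1 : Mat n)) * (A + c • (1 : Mat n)) -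
            (A + c • (1 : Mat n)) * (Aᴴ + (starRingEnd ℂ c) • (1 : Mat n)) := by
        simp only [add_mul, mul_add, smul_mul_assoc, mul_smul_comm, mul_one, one_mul, smul_smul]
        module
      have hz : Aᴴ * A - A * Aᴴ = 0 := by rw [key, hU, hV, sub_self]
      exact (sub_eq_zero.mp hz).symm
    obtain ⟨d, hd⟩ := h5 A hA hnorm
    exact ⟨d + c, by rw [hd, ← add_smul]⟩
  tfae_have 4 → 3 := by
    intro h4 P hP hPP hPh
    have hmem : ∃ A ∈ S, ∃ c : ℂ, (-2 : ℂ) • P + (1 : Mat n) = A + c • (1 : Mat n) :=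
      ⟨(-2 : ℂ) • P, hS.2.2.1 _ _ hP, 1, by rw [one_smul]⟩
    have hstar : (starRingEnd ℂ) (2 : ℂ) = 2 := Complex.conj_ofNat 2
    have hBh : ((-2 : ℂ) • P + (1 : Mat n))ᴴ = (-2 : ℂ) • P + (1 : Mat n) := by
      simp [conjTranspose_add, conjTranspose_smul, conjTranspose_one, hPh, hstar, map_ofNat]
    have hBB : ((-2 : ℂ) • P + 1) * ((-2 : ℂ) • P + 1) = (1 : Mat n) := by
      simp only [add_mul, mul_add, smul_mul_assoc, mul_smul_comm, mul_one, one_mul, smul_smul,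
        hPP]
      module
    obtain ⟨e, he⟩ := h4 _ hmem (by rw [hBh]; exact hBB) (by rw [hBh]; exact hBB)
    have h2 : P = (-2 : ℂ)⁻¹ • (e • (1 : Mat n) - 1) := by
      rw [← he]; module
    have hPscalar : P = ((1 - e) / 2) • (1 : Mat n) := by
      rw [h2]; module
    exact scalar_proj _ hPscalar hPP
  tfae_finish
end
end

section
/- Let 𝒜 ⊆ Mₙ(ℂ) be an operator algebra whose complex dimension d satisfies 2d ≥ n² + 2 (i.e., d ≥ n²/2 + 1). Then 𝒜 is not antisymmetric: there exists A ∈ 𝒜 ∩ 𝒜* that is not a complex scalar multiple of the identity matrix. -/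
open Matrix

noncomputable section

/-- star as a real-linear equivalence of matrices. -/
def starEquivR (n : ℕ) : Mat n ≃ₗ[ℝ] Mat n where
  toFun A := star A
  invFun A := star A
  map_add' A B := star_add A B
  map_smul' r A := by simp [star_smul]
  left_inv A := star_star A
  right_inv A := star_star A

/-- An operator algebra in `Mₙ(ℂ)` of complex dimension `d` with `2d ≥ n² + 2` is not
antisymmetric: it contains an element of `𝒜 ∩ 𝒜*` which is not a scalar multiple of `I`. -/
theorem not_antisym_of_large_dim (n : ℕ) (S : Set (Mat n)) (hS : IsOpAlg S)
    (hdim : n ^ 2 + 2 ≤ 2 * Module.finrank ℂ (Submodule.span ℂ S)) :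
    ∃ A ∈ S, Aᴴ ∈ S ∧ ∀ c : ℂ, A ≠ c • (1 : Mat n) := by
  obtain ⟨h0, hadd, hsmul, hmul⟩ := hS
  -- S as a complex submodule
  set V : Submodule ℂ (Mat n) :=
    { carrier := S
      zero_mem' := h0
      add_mem' := fun ha hb => hadd _ ha _ hb
      smul_mem' := fun c A ha => hsmul c A ha } with hV
  have hspan : Submodule.span ℂ S = V := Submodule.span_eq V
  rw [hspan] at hdim
  -- switch to real scalars
  set VR : Submodule ℝ (Mat n) := V.restrictScalars ℝ with hVR
  have hfr : Module.finrank ℝ VR = 2 * Module.finrank ℂ V := by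
    have := Module.finrank_mul_finrank ℝ ℂ V
    rw [Complex.finrank_real_complex] at this
    exact this.symm
  set Vstar : Submodule ℝ (Mat n) := VR.map (starEquivR n : Mat n →ₗ[ℝ] Mat n) with hVs
  have hfrs : Module.finrank ℝ Vstar = Module.finrank ℝ VR :=
    LinearEquiv.finrank_map_eq (starEquivR n) VR
  have hMfr : Module.finrank ℝ (Mat n) = 2 * n ^ 2 := by
    have h1 := Module.finrank_mul_finrank ℝ ℂ (Mat n)
    rw [Complex.finrank_real_complex] at h1
    rw [← h1, Module.finrank_matrix (R:=ℂ) (M:=ℂ) (Fin n) (Fin n)]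
    simp [pow_two]
  have hsup : Module.finrank ℝ (VR ⊔ Vstar : Submodule ℝ (Mat n)) ≤ 2 * n ^ 2 := by
    rw [← hMfr]; exact Submodule.finrank_le _
  have hformula := Submodule.finrank_sup_add_finrank_inf_eq VR Vstar
  have hinf : 4 ≤ Module.finrank ℝ (VR ⊓ Vstar : Submodule ℝ (Mat n)) := by
    omega
  -- the real span of ℂ • 1
  set L : Submodule ℝ (Mat n) := (Submodule.span ℂ {(1 : Mat n)}).restrictScalars ℝ with hL
  have hLrange : L = LinearMap.range
      ((LinearMap.toSpanSingleton ℂ (Mat n) (1 : Mat n)).restrictScalars ℝ) := by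
    ext x
    simp [hL, Submodule.mem_span_singleton, LinearMap.toSpanSingleton, eq_comm]
  have hLle : Module.finrank ℝ L ≤ 2 := by
    rw [hLrange]
    calc Module.finrank ℝ _ ≤ Module.finrank ℝ ℂ := LinearMap.finrank_range_le _
    _ = 2 := Complex.finrank_real_complex
  have hnot : ¬ (VR ⊓ Vstar : Submodule ℝ (Mat n)) ≤ L := by
    intro hle
    have := Submodule.finrank_mono hle
    omega
  rw [SetLike.not_le_iff_exists] at hnot
  obtain ⟨A, hAW, hAL⟩ := hnot
  obtain ⟨hA1, hA2⟩ := hAW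
  obtain ⟨B, hB, hBA⟩ := hA2
  refine ⟨A, hA1, ?_, ?_⟩
  · have : Aᴴ = B := by
      rw [← hBA]; exact star_star B
    rw [this]; exact hB
  · intro c hc
    apply hAL
    rw [hc]
    exact Submodule.mem_span_singleton.mpr ⟨c, rfl⟩
end
end

section
/- Let 𝒜 ⊆ Mₙ(ℂ) be an operator algebra, let E be a semi-invariant subspace of ℂⁿ for 𝒜, and let P be the orthogonal projection onto E. Suppose F is a subspace of E that is semi-invariant for the compression algebra {PAP : A ∈ 𝒜}, i.e., F = F₁ ∩ F₂ᗮ for some subspaces F₂ ⊆ F₁ ⊆ E such that (PAP)(Fᵢ) ⊆ Fᵢ for all A ∈ 𝒜 and i = 1,2. Then F is semi-invariant for 𝒜. -/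
open Matrix ContinuousLinearMap

noncomputable section

abbrev Euc (n : ℕ) := EuclideanSpace ℂ (Fin n)

/-- The operator on Euclidean space corresponding to a matrix. -/
def opOf {n : ℕ} (A : Mat n) : Euc n →L[ℂ] Euc n := Matrix.toEuclideanCLM (𝕜 := ℂ) A

/-- Orthogonal projection onto `E` as an endomorphism of `ℂⁿ`. -/
def oproj {n : ℕ} (E : Submodule ℂ (Euc n)) : Euc n →L[ℂ] Euc n :=
  E.subtypeL ∘L E.orthogonalProjectionOnto

def InvariantSub {n : ℕ} (S : Set (Mat n)) (E : Submodule ℂ (Euc n)) : Prop :=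
  ∀ A ∈ S, ∀ x ∈ E, opOf A x ∈ E

def SemiInvariantSub {n : ℕ} (S : Set (Mat n)) (E : Submodule ℂ (Euc n)) : Prop :=
  ∃ E₁ E₂ : Submodule ℂ (Euc n), InvariantSub S E₁ ∧ InvariantSub S E₂ ∧ E₂ ≤ E₁ ∧ E = E₁ ⊓ E₂ᗮ

/-- The compression `PAP` of a matrix to a subspace. -/
def compr {n : ℕ} (E : Submodule ℂ (Euc n)) (A : Mat n) : Euc n →L[ℂ] Euc n :=
  oproj E ∘L opOf A ∘L oproj E

/-- Hereditary antisymmetry: the compression to every semi-invariant subspace is antisymmetric. -/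
def HerAntisym {n : ℕ} (S : Set (Mat n)) : Prop :=
  ∀ E : Submodule ℂ (Euc n), SemiInvariantSub S E →
    ∀ A ∈ S, ∀ B ∈ S, compr E A = ContinuousLinearMap.adjoint (compr E B) →
      ∃ c : ℂ, compr E A = c • oproj E

/-- A subquotient of a subquotient is a subquotient: if `E` is semi-invariant for `𝒜` and
`F = F₁ ∩ F₂ᗮ ⊆ E` with `F₂ ⊆ F₁ ⊆ E` invariant for the compression `{PAP : A ∈ 𝒜}`, then
`F` is semi-invariant for `𝒜`. -/
theorem semiInvariant_of_semiInvariant_compression (n : ℕ) (S : Set (Mat n)) (hS : IsOpAlg S)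
    (E : Submodule ℂ (Euc n)) (hE : SemiInvariantSub S E)
    (F F₁ F₂ : Submodule ℂ (Euc n)) (hF₂₁ : F₂ ≤ F₁) (hF₁E : F₁ ≤ E)
    (h1 : ∀ A ∈ S, ∀ x ∈ F₁, compr E A x ∈ F₁)
    (h2 : ∀ A ∈ S, ∀ x ∈ F₂, compr E A x ∈ F₂)
    (hF : F = F₁ ⊓ F₂ᗮ) :
    SemiInvariantSub S F := by
  obtain ⟨E₁, E₂, hI1, hI2, hle, hEeq⟩ := hE
  have hEE₁ : E ≤ E₁ := hEeq ▸ inf_le_left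
  have hEE₂ : E ≤ E₂ᗮ := hEeq ▸ inf_le_right
  -- projection fixes E
  have hproj_mem : ∀ x ∈ E, oproj E x = x := by
    intro x hx
    simpa [oproj] using Submodule.eq_starProjection_of_mem_orthogonal (K := E) hx (by simp)
  -- for y ∈ E₁, y - oproj E y ∈ E₂
  have hkey : ∀ y ∈ E₁, y - oproj E y ∈ E₂ := by
    intro y hy
    have hvE : y - (E₂.subtypeL (E₂.orthogonalProjectionOnto y)) ∈ E := by
      rw [hEeq]
      refine ⟨E₁.sub_mem hy (hle (by simp [oproj])), ?_⟩
      simpa [oproj] using Submodule.sub_starProjection_mem_orthogonal (K := E₂) y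
    have : oproj E y = y - (E₂.subtypeL (E₂.orthogonalProjectionOnto y)) := by
      have := Submodule.eq_starProjection_of_mem_orthogonal (K := E) (u := y) hvE (by
        simp only [sub_sub_cancel]
        intro w hw
        have : (E₂.subtypeL (E₂.orthogonalProjectionOnto y) : Euc n) ∈ E₂ := by simp
        exact ((Submodule.mem_orthogonal' E₂ _).mp (hEE₂ hw) _ this))
      simpa [oproj] using this
    rw [this]
    simpa using (E₂.subtypeL (E₂.orthogonalProjectionOnto y)).2
  refine ⟨E₂ ⊔ F₁, E₂ ⊔ F₂, ?_, ?_, sup_le_sup_left hF₂₁ _, ?_⟩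
  · intro A hA x hx
    rw [Submodule.mem_sup] at hx
    obtain ⟨e, he, f, hf, rfl⟩ := hx
    rw [map_add]
    refine Submodule.add_mem _ (Submodule.mem_sup_left (hI2 A hA e he)) ?_
    have hfE := hF₁E hf
    have hAf : opOf A f ∈ E₁ := hI1 A hA f (hEE₁ hfE)
    have : opOf A f = (opOf A f - oproj E (opOf A f)) + oproj E (opOf A f) := by abel
    rw [this]
    refine Submodule.add_mem _ (Submodule.mem_sup_left (hkey _ hAf)) (Submodule.mem_sup_right ?_)
    have := h1 A hA f hf
    simpa [compr, hproj_mem f hfE] using this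
  · intro A hA x hx
    rw [Submodule.mem_sup] at hx
    obtain ⟨e, he, f, hf, rfl⟩ := hx
    rw [map_add]
    refine Submodule.add_mem _ (Submodule.mem_sup_left (hI2 A hA e he)) ?_
    have hfE := hF₁E (hF₂₁ hf)
    have hAf : opOf A f ∈ E₁ := hI1 A hA f (hEE₁ hfE)
    have : opOf A f = (opOf A f - oproj E (opOf A f)) + oproj E (opOf A f) := by abel
    rw [this]
    refine Submodule.add_mem _ (Submodule.mem_sup_left (hkey _ hAf)) (Submodule.mem_sup_right ?_)
    have := h2 A hA f hf
    simpa [compr, hproj_mem f hfE] using this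
  · rw [← Submodule.inf_orthogonal, hF]
    ext x
    constructor
    · rintro ⟨hx1, hx2⟩
      exact ⟨Submodule.mem_sup_right hx1, (hEE₂ (hF₁E hx1)), hx2⟩
    · rintro ⟨hx1, hxe, hx2⟩
      obtain ⟨e, he, f, hf, rfl⟩ := Submodule.mem_sup.mp hx1
      have : e ∈ E₂ ⊓ E₂ᗮ := ⟨he, by
        have hfo : f ∈ E₂ᗮ := hEE₂ (hF₁E hf)
        have : e = (e + f) - f := by abel
        rw [this]; exact Submodule.sub_mem _ hxe hfo⟩
      rw [Submodule.inf_orthogonal_eq_bot] at this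
      simp only [Submodule.mem_bot] at this
      subst this
      exact ⟨by simpa using hf, by simpa using hx2⟩
end
end

section
/- Let n₁,…,n_k be positive integers with n₁ + ⋯ + n_k = n and let A ∈ Mₙ(ℂ) be (n₁,…,n_k)-Jordanesque. Let λ be a nonzero diagonal entry of A. Then the diagonal matrix D defined by D_{ii} = 1 if A_{ii} = λ and D_{ii} = 0 otherwise belongs to the (possibly non-unital) algebra generated by A; that is, D lies in the complex linear span of {A^m : m ≥ 1}. -/
open Matrix

noncomputable section

/-- If `A` is a Jordanesque matrix (block diagonal with blocks given by the fibers of the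
monotone surjection `f`, each block upper triangular with constant main diagonal) and `λ ≠ 0`
is one of its diagonal entries, then the diagonal matrix which is `1` exactly where the
diagonal of `A` equals `λ` lies in the (non-unital) algebra generated by `A`. -/
theorem diagonal_indicator_mem_span_powers (n k : ℕ) (f : Fin n → Fin k)
    (hmono : Monotone f) (hsurj : Function.Surjective f)
    (A : Mat n)
    (hblock : ∀ i j : Fin n, (f i ≠ f j ∨ j < i) → A i j = 0)
    (hdiag : ∀ i j : Fin n, f i = f j → A i i = A j j)
    (lam : ℂ) (hlam : lam ≠ 0) (i₀ : Fin n) (hi₀ : A i₀ i₀ = lam) :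
    (Matrix.diagonal fun i => if A i i = lam then (1 : ℂ) else 0) ∈
      Submodule.span ℂ {B : Mat n | ∃ m : ℕ, 1 ≤ m ∧ B = A ^ m} := by
  classical
  -- powers of A are block diagonal
  have hpow : ∀ m : ℕ, ∀ l j : Fin n, f l ≠ f j → (A ^ m) l j = 0 := by
    intro m
    induction m with
    | zero =>
      intro l j h
      have : l ≠ j := fun e => h (e ▸ rfl)
      simp [Matrix.one_apply_ne this]
    | succ m ih =>
      intro l j h
      rw [pow_succ', Matrix.mul_apply]
      apply Finset.sum_eq_zero
      intro l' _
      by_cases hc : f l = f l'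
      · rw [ih l' j (hc ▸ h), mul_zero]
      · rw [hblock l l' (Or.inl hc), zero_mul]
  -- polynomials in A are block diagonal
  have haev : ∀ q : Polynomial ℂ, ∀ l j : Fin n, f l ≠ f j →
      (Polynomial.aeval A q) l j = 0 := by
    intro q l j h
    rw [Polynomial.aeval_eq_sum_range]
    rw [Matrix.sum_apply]
    apply Finset.sum_eq_zero
    intro m _
    rw [Matrix.smul_apply, hpow m l j h, smul_zero]
  -- nilpotency within a block
  have hnilp : ∀ (t : Fin k) (μ : ℂ), (∀ i' : Fin n, f i' = t → A i' i' = μ) →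
      ∀ m : ℕ, ∀ i j : Fin n, f i = t → f j = t → (j : ℕ) < (i : ℕ) + m →
        ((A - μ • 1) ^ m) i j = 0 := by
    intro t μ hμ m
    induction m with
    | zero =>
      intro i j hi hj hlt
      have : i ≠ j := by
        intro e; subst e; omega
      simp [Matrix.one_apply_ne this]
    | succ m ih =>
      intro i j hi hj hlt
      rw [pow_succ', Matrix.mul_apply]
      apply Finset.sum_eq_zero
      intro l _
      by_cases hl : f l = t
      · by_cases hle : (l : ℕ) ≤ (i : ℕ)
        · have hBil : (A - μ • 1) i l = 0 := by
            rcases eq_or_lt_of_le hle with heq | hltl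
            · have : l = i := Fin.ext heq
              subst this
              simp [Matrix.sub_apply, Matrix.one_apply, hμ l hl]
            · have : A i l = 0 := hblock i l (Or.inr hltl)
              have hne : i ≠ l := by
                intro e; subst e; exact lt_irrefl _ hltl
              simp [Matrix.sub_apply, Matrix.one_apply_ne hne, this]
          rw [hBil, zero_mul]
        · push_neg at hle
          have : ((A - μ • 1) ^ m) l j = 0 := by
            apply ih l j hl hj
            omega
          rw [this, mul_zero]
      · have hBil : (A - μ • 1) i l = 0 := by
          have hne : i ≠ l := by
            intro e; subst e; exact hl hi
          have : A i l = 0 := hblock i l (Or.inl (by rw [hi]; exact fun e => hl e.symm))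
          simp [Matrix.sub_apply, Matrix.one_apply_ne hne, this]
        rw [hBil, zero_mul]
  -- set of "other" eigenvalues, including 0
  set T : Finset ℂ := insert 0 ((Finset.univ.image fun i : Fin n => A i i).erase lam)
    with hT
  have hlamT : lam ∉ T := by
    simp only [hT, Finset.mem_insert, Finset.mem_erase]
    push_neg
    exact ⟨hlam, fun h => absurd rfl h⟩
  set q : Polynomial ℂ := ∏ μ ∈ T, (Polynomial.X - Polynomial.C μ) ^ n with hq
  have hcop : IsCoprime q ((Polynomial.X - Polynomial.C lam) ^ n) := by
    apply IsCoprime.pow_right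
    apply IsCoprime.prod_left
    intro μ hμ
    have hne : μ - lam ≠ 0 := sub_ne_zero.mpr (fun h => hlamT (h ▸ hμ))
    exact (Polynomial.isCoprime_X_sub_C_of_isUnit_sub hne.isUnit).pow_left
  obtain ⟨a, b, hab⟩ := hcop
  set p : Polynomial ℂ := a * q with hp
  have hdvdT : ∀ μ ∈ T, (Polynomial.X - Polynomial.C μ) ^ n ∣ p :=
    fun μ hμ => (Finset.dvd_prod_of_mem (f := fun μ => (Polynomial.X - Polynomial.C μ) ^ n) hμ).trans (dvd_mul_left q a)
  have hdvdlam : (Polynomial.X - Polynomial.C lam) ^ n ∣ p - 1 := by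
    have : p - 1 = -(b * (Polynomial.X - Polynomial.C lam) ^ n) := by
      rw [← hab]; ring
    rw [this]
    exact (dvd_mul_left _ b).neg_right
  have hn1 : 1 ≤ n := i₀.pos
  have hp0 : p.coeff 0 = 0 := by
    have h0T : (0 : ℂ) ∈ T := Finset.mem_insert_self 0 _
    have hd := hdvdT 0 h0T
    rw [map_zero, sub_zero] at hd
    have : Polynomial.X ∣ p := dvd_trans (dvd_pow_self Polynomial.X (by omega)) hd
    exact Polynomial.X_dvd_iff.mp this
  -- key computation: p(A) is the desired diagonal matrix
  have hpA : Polynomial.aeval A p =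
      Matrix.diagonal (fun i => if A i i = lam then (1 : ℂ) else 0) := by
    ext i j
    by_cases hf : f i = f j
    · set μ : ℂ := A i i with hμdef
      set c₀ : ℂ := if μ = lam then 1 else 0 with hc₀
      have hdvd : (Polynomial.X - Polynomial.C μ) ^ n ∣ p - Polynomial.C c₀ := by
        by_cases hμl : μ = lam
        · rw [hc₀, if_pos hμl, _root_.map_one, hμl]
          exact hdvdlam
        · rw [hc₀, if_neg hμl, map_zero, sub_zero]
          apply hdvdT
          rw [hT]
          apply Finset.mem_insert_of_mem
          exact Finset.mem_erase.mpr ⟨hμl, Finset.mem_image_of_mem _ (Finset.mem_univ i)⟩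
      obtain ⟨r, hr⟩ := hdvd
      have hp' : p = Polynomial.C c₀ + (Polynomial.X - Polynomial.C μ) ^ n * r := by
        rw [← hr]; ring
      have heval : Polynomial.aeval A p =
          c₀ • (1 : Mat n) + (A - μ • 1) ^ n * Polynomial.aeval A r := by
        rw [hp', map_add, _root_.map_mul, map_pow, map_sub, Polynomial.aeval_X,
          Polynomial.aeval_C, Polynomial.aeval_C, Algebra.algebraMap_eq_smul_one,
          Algebra.algebraMap_eq_smul_one]
      rw [heval, Matrix.add_apply, Matrix.mul_apply]
      have hsum : ∑ l, ((A - μ • 1) ^ n) i l * (Polynomial.aeval A r) l j = 0 := by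
        apply Finset.sum_eq_zero
        intro l _
        by_cases hl : f l = f j
        · have : ((A - μ • 1) ^ n) i l = 0 := by
            apply hnilp (f i) μ (fun i' h => hdiag i' i h) n i l rfl (hl.trans hf.symm)
            have := l.isLt
            omega
          rw [this, zero_mul]
        · rw [haev r l j hl, mul_zero]
      rw [hsum, add_zero, Matrix.smul_apply, Matrix.one_apply, Matrix.diagonal_apply]
      by_cases hij : i = j
      · subst hij
        simp [hc₀, hμdef]
      · simp [hij]
    · have hne : i ≠ j := fun e => hf (e ▸ rfl)
      rw [haev p i j hf, Matrix.diagonal_apply_ne _ hne]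
  -- membership in the span
  rw [← hpA, Polynomial.aeval_eq_sum_range]
  apply Submodule.sum_mem
  intro m _
  rcases Nat.eq_zero_or_pos m with h0 | h1
  · subst h0
    rw [hp0, zero_smul]
    exact Submodule.zero_mem _
  · exact Submodule.smul_mem _ _ (Submodule.subset_span ⟨m, h1, rfl⟩)
end
end

section
/- Fix positive integers n₁,…,n_k with n₁ + ⋯ + n_k = n, and let 𝒜 ⊆ Mₙ(ℂ) be an operator algebra all of whose elements are (n₁,…,n_k)-Jordanesque. Then for every A ∈ 𝒜, the diagonal matrix whose diagonal entries agree with those of A belongs to 𝒜; consequently every A ∈ 𝒜 is the sum of a diagonal matrix in 𝒜 and a strictly upper triangular (nilpotent) matrix in 𝒜. -/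
open Matrix

noncomputable section

open Polynomial in
lemma crt_aux (n : ℕ) (V : Finset ℂ) :
    ∃ p : Polynomial ℂ, ∀ c ∈ V, (X - C c)^n ∣ (p - C c) := by
  classical
  induction V using Finset.induction_on with
  | empty => exact ⟨0, by simp⟩
  | @insert c V' hc ih =>
    obtain ⟨p', hp'⟩ := ih
    have hcop : IsCoprime ((X - C c)^n) (∏ c' ∈ V', (X - C c')^n) := by
      apply IsCoprime.prod_right
      intro c' hc'
      have hne : c ≠ c' := fun h => hc (h ▸ hc')
      have : IsUnit (c - c') := (sub_ne_zero.mpr hne).isUnit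
      exact (Polynomial.isCoprime_X_sub_C_of_isUnit_sub this).pow
    obtain ⟨u, v, huv⟩ := hcop
    set g : Polynomial ℂ := ∏ c' ∈ V', (X - C c')^n with hg
    refine ⟨C c * v * g + p' * u * (X - C c)^n, ?_⟩
    intro c' hc'
    rcases Finset.mem_insert.mp hc' with h | h
    · subst h
      have heq : C c' * v * g + p' * u * (X - C c')^n - C c'
          = ((p' - C c') * u) * (X - C c')^n := by
        linear_combination C c' * huv
      rw [heq]
      exact Dvd.intro_left _ rfl
    · have heq : C c * v * g + p' * u * (X - C c)^n - C c'
          = (p' - C c') + ((C c - p') * v) * g := by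
        linear_combination p' * huv
      rw [heq]
      refine dvd_add (hp' c' h) (Dvd.dvd.mul_left ?_ _)
      exact Finset.dvd_prod_of_mem _ h

lemma blk_mul {n k : ℕ} (f : Fin n → Fin k) {M N : Mat n}
    (hM : ∀ i j, f i ≠ f j → M i j = 0)
    (hN : ∀ i j, f i ≠ f j → N i j = 0) :
    ∀ i j, f i ≠ f j → (M * N) i j = 0 := by
  intro i j hij
  rw [Matrix.mul_apply]
  apply Finset.sum_eq_zero
  intro t _
  by_cases ht : f i = f t
  · rw [hN t j (ht ▸ hij), mul_zero]
  · rw [hM i t ht, zero_mul]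

lemma blk_pow {n k : ℕ} (f : Fin n → Fin k) {M : Mat n}
    (hM : ∀ i j, f i ≠ f j → M i j = 0) (m : ℕ) :
    ∀ i j, f i ≠ f j → (M ^ (m + 1)) i j = 0 := by
  induction m with
  | zero => simpa using hM
  | succ m ih => rw [pow_succ]; exact blk_mul f ih hM

lemma blk_aeval {n k : ℕ} (f : Fin n → Fin k) {A : Mat n}
    (hA : ∀ i j, f i ≠ f j → A i j = 0) (q : Polynomial ℂ) :
    ∀ i j, f i ≠ f j → (Polynomial.aeval A q) i j = 0 := by
  induction q using Polynomial.induction_on with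
  | C a =>
    intro i j hij
    have hne : i ≠ j := fun h => hij (congrArg f h)
    simp [Algebra.algebraMap_eq_smul_one, Matrix.smul_apply, Matrix.one_apply_ne hne]
  | add p q hp hq =>
    intro i j hij
    rw [map_add, Matrix.add_apply, hp i j hij, hq i j hij, add_zero]
  | monomial m a _ =>
    intro i j hij
    rw [_root_.map_mul, map_pow, Polynomial.aeval_C, Polynomial.aeval_X]
    rw [Algebra.algebraMap_eq_smul_one, smul_mul_assoc, one_mul, Matrix.smul_apply,
      blk_pow f hA m i j hij, smul_zero]

lemma pow_block_zero {n k : ℕ} (f : Fin n → Fin k) {M : Mat n}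
    (hblk : ∀ i j, f i ≠ f j → M i j = 0) (b : Fin k)
    (hsup : ∀ i j, f i = b → f j = b → j ≤ i → M i j = 0) :
    ∀ (m : ℕ) (i l : Fin n), f i = b → f l = b → (l : ℕ) < (i : ℕ) + m → (M ^ m) i l = 0 := by
  intro m
  induction m with
  | zero =>
    intro i l _ _ hlt
    have hne : i ≠ l := by
      intro h; subst h; simp at hlt
    rw [pow_zero, Matrix.one_apply_ne hne]
  | succ m ih =>
    intro i l hi hl hlt
    rw [pow_succ', Matrix.mul_apply]
    apply Finset.sum_eq_zero
    intro t _
    by_cases ht : f t = b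
    · by_cases hti : (t : ℕ) ≤ (i : ℕ)
      · rw [hsup i t hi ht (by exact_mod_cast hti), zero_mul]
      · rw [ih t l ht hl (by omega), mul_zero]
    · rw [hblk i t (by rw [hi]; exact fun h => ht h.symm), zero_mul]

/-- If every element of the operator algebra `𝒜` is `(n₁,…,n_k)`-Jordanesque (block structure
given by the fibers of the monotone surjection `f`), then for every `A ∈ 𝒜` the diagonal matrix
with the same diagonal as `A` belongs to `𝒜`, and `A` is the sum of this diagonal matrix and a
strictly upper triangular matrix in `𝒜`. -/
theorem jordanesque_algebra_diag_add_nil (n k : ℕ) (f : Fin n → Fin k)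
    (hmono : Monotone f) (hsurj : Function.Surjective f)
    (S : Set (Mat n)) (hS : IsOpAlg S)
    (hJ : ∀ A ∈ S, (∀ i j : Fin n, (f i ≠ f j ∨ j < i) → A i j = 0) ∧
      (∀ i j : Fin n, f i = f j → A i i = A j j)) :
    ∀ A ∈ S, (Matrix.diagonal fun i => A i i) ∈ S ∧
      A - (Matrix.diagonal fun i => A i i) ∈ S ∧
      ∀ i j : Fin n, j ≤ i → (A - Matrix.diagonal fun i => A i i) i j = 0 := by
  classical
  intro A hA
  obtain ⟨h0, hadd, hsmul, hmul⟩ := hS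
  obtain ⟨hA1, hA2⟩ := hJ A hA
  set d : Fin n → ℂ := fun i => A i i with hd
  set D : Mat n := Matrix.diagonal d with hD
  rcases Nat.eq_zero_or_pos n with hn | hn
  · subst hn
    have hDA : D = A := by ext i j; exact i.elim0
    refine ⟨hDA ▸ hA, ?_, fun i j _ => i.elim0⟩
    rw [hDA, sub_self]; exact h0
  -- main case
  have hblkA : ∀ i j, f i ≠ f j → A i j = 0 := fun i j h => hA1 i j (Or.inl h)
  obtain ⟨p, hp⟩ := crt_aux n (insert 0 (Finset.image d Finset.univ))
  -- membership machinery
  have hpowS : ∀ m : ℕ, A ^ (m + 1) ∈ S := by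
    intro m
    induction m with
    | zero => simpa using hA
    | succ m ihm => rw [pow_succ]; exact hmul _ ihm _ hA
  have hmulS : ∀ q : Polynomial ℂ, A * Polynomial.aeval A q ∈ S := by
    intro q
    induction q using Polynomial.induction_on with
    | C a =>
      have : A * Polynomial.aeval A (Polynomial.C a) = a • A := by
        rw [Polynomial.aeval_C, Algebra.algebraMap_eq_smul_one, mul_smul_comm, mul_one]
      rw [this]; exact hsmul a A hA
    | add q r hq hr =>
      rw [map_add, mul_add]; exact hadd _ hq _ hr
    | monomial m a _ =>
      have : A * Polynomial.aeval A (Polynomial.C a * Polynomial.X ^ (m + 1))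
          = a • A ^ (m + 2) := by
        rw [_root_.map_mul, map_pow, Polynomial.aeval_C, Polynomial.aeval_X,
          Algebra.algebraMap_eq_smul_one, smul_mul_assoc, one_mul, mul_smul_comm,
          ← pow_succ']
      rw [this]; exact hsmul a _ (hpowS (m + 1))
  -- p has zero constant term
  have hX : Polynomial.X ∣ p := by
    have h0V := hp 0 (Finset.mem_insert_self _ _)
    simp only [map_zero, sub_zero] at h0V
    exact dvd_trans (dvd_pow_self Polynomial.X hn.ne') h0V
  obtain ⟨r, hr⟩ := hX
  have hPS : Polynomial.aeval A p ∈ S := by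
    rw [hr, _root_.map_mul, Polynomial.aeval_X]; exact hmulS r
  -- aeval A p = D
  have hPD : Polynomial.aeval A p = D := by
    ext i j
    by_cases hfij : f i = f j
    · -- same block
      have hcV : d i ∈ insert (0:ℂ) (Finset.image d Finset.univ) :=
        Finset.mem_insert_of_mem (Finset.mem_image_of_mem d (Finset.mem_univ i))
      obtain ⟨g, hg⟩ := hp (d i) hcV
      set M : Mat n := A - (d i) • (1 : Mat n) with hM
      have heval : Polynomial.aeval A p - (d i) • (1 : Mat n) = M ^ n * Polynomial.aeval A g := by
        have := congrArg (Polynomial.aeval A) hg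
        simpa [sub_eq_iff_eq_add, Algebra.algebraMap_eq_smul_one] using this
      have hblkM : ∀ i' j', f i' ≠ f j' → M i' j' = 0 := by
        intro i' j' h
        have hne : i' ≠ j' := fun e => h (congrArg f e)
        simp [hM, Matrix.sub_apply, Matrix.smul_apply, Matrix.one_apply_ne hne,
          hblkA i' j' h]
      have hsupM : ∀ i' j', f i' = f i → f j' = f i → j' ≤ i' → M i' j' = 0 := by
        intro i' j' hi' hj' hle
        rcases lt_or_eq_of_le hle with hlt | heq
        · have hne : i' ≠ j' := fun e => absurd (e ▸ hlt) (lt_irrefl _)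
          simp [hM, Matrix.sub_apply, Matrix.smul_apply, Matrix.one_apply_ne hne,
            hA1 i' j' (Or.inr hlt)]
        · subst heq
          simp [hM, Matrix.sub_apply, Matrix.smul_apply, Matrix.one_apply,
            hA2 j' i hi', hd]
      have hz : (M ^ n * Polynomial.aeval A g) i j = 0 := by
        rw [Matrix.mul_apply]
        apply Finset.sum_eq_zero
        intro t _
        by_cases ht : f t = f i
        · rw [pow_block_zero f hblkM (f i) hsupM n i t rfl ht
            (by have := t.isLt; omega), zero_mul]
        · have : f t ≠ f j := fun e => ht (e.trans hfij.symm)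
          rw [blk_aeval f hblkA g t j this, mul_zero]
      have hij' : Polynomial.aeval A p i j = ((d i) • (1 : Mat n)) i j := by
        have h1 := congrFun (congrFun heval i) j
        rw [Matrix.sub_apply] at h1
        rw [hz] at h1
        exact sub_eq_zero.mp h1
      rw [hij']
      by_cases hij : i = j
      · subst hij
        simp [hD, Matrix.diagonal_apply_eq, Matrix.smul_apply, Matrix.one_apply_eq]
      · simp [hD, Matrix.diagonal_apply_ne _ hij, Matrix.smul_apply,
          Matrix.one_apply_ne hij]
    · have hne : i ≠ j := fun e => hfij (congrArg f e)
      rw [blk_aeval f hblkA p i j hfij, hD, Matrix.diagonal_apply_ne _ hne]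
  refine ⟨hPD ▸ hPS, ?_, ?_⟩
  · have hsub : A - D = A + (-1 : ℂ) • D := by
      rw [neg_one_smul, sub_eq_add_neg]
    rw [hsub]
    exact hadd A hA _ (hsmul (-1) D (hPD ▸ hPS))
  · intro i j hji
    rcases lt_or_eq_of_le hji with hlt | heq
    · have hne : i ≠ j := fun e => absurd (e ▸ hlt) (lt_irrefl _)
      rw [Matrix.sub_apply, hA1 i j (Or.inr hlt), hD,
        Matrix.diagonal_apply_ne _ hne, sub_zero]
    · subst heq
      rw [Matrix.sub_apply, hD, Matrix.diagonal_apply_eq, sub_self]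
end
end

section
/- Let n > 1 and let v = (v₁,…,vₙ) be a basis of ℂⁿ. Let 𝒟_v ⊆ Mₙ(ℂ) be the set of all matrices for which each vᵢ is an eigenvector. Then 𝒟_v is hereditarily antisymmetric if and only if v is anti-orthogonal. -/
open Matrix ContinuousLinearMap

noncomputable section

/-- `𝒟_v`: the matrices for which every `vᵢ` is an eigenvector. -/
def Dv {n : ℕ} (v : Module.Basis (Fin n) ℂ (Euc n)) : Set (Mat n) :=
  {A | ∀ i : Fin n, ∃ μ : ℂ, opOf A (v i) = μ • v i}

/-- `v` is anti-orthogonal: for all `i < j` and every subset `X` of the remaining indices,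
`⟨Q vᵢ, vⱼ⟩ ≠ 0`, where `Q` is the orthogonal projection onto `(span{v_k : k ∈ X})ᗮ`. -/
def AntiOrth {n : ℕ} (v : Module.Basis (Fin n) ℂ (Euc n)) : Prop :=
  ∀ i j : Fin n, i < j → ∀ X : Set (Fin n), i ∉ X → j ∉ X →
    (inner ℂ (oproj ((Submodule.span ℂ ((⇑v) '' X))ᗮ) (v i)) (v j) : ℂ) ≠ 0

local notation "⟪" x ", " y "⟫" => @inner ℂ _ _ x y

section Aux

open Submodule

variable {n : ℕ} (v : Module.Basis (Fin n) ℂ (Euc n))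

lemma oproj_mem (E : Submodule ℂ (Euc n)) {x : Euc n} (hx : x ∈ E) : oproj E x = x := by
  show E.starProjection x = x
  exact Submodule.starProjection_eq_self_iff.mpr hx

lemma oproj_mem' (E : Submodule ℂ (Euc n)) (x : Euc n) : oproj E x ∈ E :=
  (E.orthogonalProjectionOnto x).2

lemma oproj_orth (E : Submodule ℂ (Euc n)) {x : Euc n} (hx : x ∈ Eᗮ) : oproj E x = 0 := by
  simp [oproj, Submodule.orthogonalProjectionOnto_apply_of_mem_orthogonal hx]

lemma inner_oproj (E : Submodule ℂ (Euc n)) (x y : Euc n) :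
    ⟪oproj E x, y⟫ = ⟪x, oproj E y⟫ :=
  Submodule.inner_starProjection_left_eq_right E x y

def mkDv (μ : Fin n → ℂ) : Mat n :=
  (Matrix.toEuclideanCLM (𝕜 := ℂ)).symm
    (LinearMap.toContinuousLinearMap (v.constr ℂ (fun i => μ i • v i)))

lemma opOf_mkDv (μ : Fin n → ℂ) (i : Fin n) : opOf (mkDv v μ) (v i) = μ i • v i := by
  simp [opOf, mkDv, Module.Basis.constr_basis]

lemma mkDv_mem (μ : Fin n → ℂ) : mkDv v μ ∈ Dv v :=
  fun i => ⟨μ i, opOf_mkDv v μ i⟩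

lemma opOf_apply_eq_sum (A : Mat n) (μ : Fin n → ℂ)
    (hA : ∀ k, opOf A (v k) = μ k • v k) (x : Euc n) :
    opOf A x = ∑ k, (v.repr x k * μ k) • v k := by
  conv_lhs => rw [← Module.Basis.sum_repr v x]
  rw [map_sum]
  refine Finset.sum_congr rfl fun k _ => ?_
  rw [_root_.map_smul, hA, smul_smul]

lemma repr_zero_of_mem_span {Z : Set (Fin n)} {x : Euc n}
    (hx : x ∈ span ℂ (⇑v '' Z)) {k : Fin n} (hk : k ∉ Z) : v.repr x k = 0 := by
  by_contra h
  exact hk (Module.Basis.repr_support_subset_of_mem_span v Z hx (Finsupp.mem_support_iff.mpr h))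

lemma invariant_span (Z : Set (Fin n)) : InvariantSub (Dv v) (span ℂ (⇑v '' Z)) := by
  intro A hA x hx
  induction hx using Submodule.span_induction with
  | mem y hy =>
      obtain ⟨k, hk, rfl⟩ := hy
      obtain ⟨μ, hμ⟩ := hA k
      rw [hμ]
      exact Submodule.smul_mem _ _ (Submodule.subset_span ⟨k, hk, rfl⟩)
  | zero => simp
  | add y z _ _ hy hz => rw [map_add]; exact Submodule.add_mem _ hy hz
  | smul c y _ hy => rw [_root_.map_smul]; exact Submodule.smul_mem _ _ hy

lemma invariant_eq_span {E : Submodule ℂ (Euc n)} (hE : InvariantSub (Dv v) E) :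
    E = span ℂ (⇑v '' {i | v i ∈ E}) := by
  refine le_antisymm ?_ ?_
  · intro x hx
    have hx' : ∀ k, v.repr x k ≠ 0 → v k ∈ E := by
      intro k hk
      have hAx : opOf (mkDv v (fun l => if l = k then 1 else 0)) x = v.repr x k • v k := by
        rw [opOf_apply_eq_sum v _ _ (opOf_mkDv v _) x]
        rw [Finset.sum_eq_single k (fun l _ hl => by simp [hl]) (by simp)]
        simp
      have h1 : v.repr x k • v k ∈ E := hAx ▸ hE _ (mkDv_mem v _) x hx
      have h2 := Submodule.smul_mem E (v.repr x k)⁻¹ h1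
      rwa [smul_smul, inv_mul_cancel₀ hk, one_smul] at h2
    have hmem : (∑ k, v.repr x k • v k) ∈ span ℂ (⇑v '' {i | v i ∈ E}) := by
      refine Submodule.sum_mem _ fun k _ => ?_
      by_cases h : v.repr x k = 0
      · simp [h]
      · exact Submodule.smul_mem _ _ (Submodule.subset_span ⟨k, hx' k h, rfl⟩)
    rwa [Module.Basis.sum_repr v x] at hmem
  · rw [Submodule.span_le]
    rintro _ ⟨i, hi, rfl⟩
    exact hi

def wvec (X : Set (Fin n)) (k : Fin n) : Euc n :=
  oproj ((span ℂ (⇑v '' X))ᗮ) (v k)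

lemma wvec_eq (X : Set (Fin n)) (k : Fin n) :
    wvec v X k = v k - oproj (span ℂ (⇑v '' X)) (v k) := by
  simpa [wvec, oproj] using Submodule.starProjection_orthogonal_val (K := span ℂ (⇑v '' X)) (v k)

lemma wvec_mem_orth (X : Set (Fin n)) (k : Fin n) : wvec v X k ∈ (span ℂ (⇑v '' X))ᗮ :=
  oproj_mem' _ _

lemma wvec_mem_span {X Y : Set (Fin n)} (hXY : X ⊆ Y) {k : Fin n} (hk : k ∈ Y) :
    wvec v X k ∈ span ℂ (⇑v '' Y) := by
  rw [wvec_eq]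
  refine Submodule.sub_mem _ (Submodule.subset_span ⟨k, hk, rfl⟩) ?_
  exact Submodule.span_mono (Set.image_mono hXY) (oproj_mem' _ _)

lemma wvec_zero {X : Set (Fin n)} {k : Fin n} (hk : k ∈ X) : wvec v X k = 0 :=
  oproj_orth _ (Submodule.le_orthogonal_orthogonal _ (Submodule.subset_span ⟨k, hk, rfl⟩))

lemma wvec_ne_zero {X : Set (Fin n)} {k : Fin n} (hk : k ∉ X) : wvec v X k ≠ 0 := by
  intro h
  rw [wvec_eq, sub_eq_zero] at h
  have : v k ∈ span ℂ (⇑v '' X) := h ▸ oproj_mem' _ _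
  exact hk ((Module.Basis.self_mem_span_image v).mp this)

lemma repr_wvec (X : Set (Fin n)) (k : Fin n) {l : Fin n} (hl : l ∉ X) :
    v.repr (wvec v X k) l = if k = l then 1 else 0 := by
  rw [wvec_eq, map_sub]
  have h2 : v.repr (oproj (span ℂ (⇑v '' X)) (v k)) l = 0 :=
    repr_zero_of_mem_span v (oproj_mem' _ _) hl
  simp [h2, Module.Basis.repr_self, Finsupp.single_apply]

lemma inner_wvec (X : Set (Fin n)) (k l : Fin n) :
    ⟪wvec v X k, wvec v X l⟫ = ⟪wvec v X k, v l⟫ := by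
  have h1 : oproj ((span ℂ (⇑v '' X))ᗮ) (wvec v X k) = wvec v X k :=
    oproj_mem _ (wvec_mem_orth v X k)
  calc ⟪wvec v X k, wvec v X l⟫ = ⟪oproj ((span ℂ (⇑v '' X))ᗮ) (wvec v X k), v l⟫ := by
        rw [inner_oproj]; rfl
    _ = ⟪wvec v X k, v l⟫ := by rw [h1]

lemma K_le_Eorth (X Y : Set (Fin n)) :
    span ℂ (⇑v '' X) ≤ (span ℂ (⇑v '' Y) ⊓ (span ℂ (⇑v '' X))ᗮ)ᗮ := by
  refine le_trans (Submodule.le_orthogonal_orthogonal _) (Submodule.orthogonal_le ?_)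
  exact inf_le_right

lemma oproj_E_v {X Y : Set (Fin n)} (hXY : X ⊆ Y) {k : Fin n} (hk : k ∈ Y) :
    oproj (span ℂ (⇑v '' Y) ⊓ (span ℂ (⇑v '' X))ᗮ) (v k) = wvec v X k := by
  set E := span ℂ (⇑v '' Y) ⊓ (span ℂ (⇑v '' X))ᗮ with hE
  have hw : wvec v X k ∈ E := ⟨wvec_mem_span v hXY hk, wvec_mem_orth v X k⟩
  have hu : v k - wvec v X k ∈ Eᗮ := by
    rw [wvec_eq, sub_sub_cancel]
    exact K_le_Eorth v X Y (oproj_mem' _ _)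
  have hvk : v k = wvec v X k + (v k - wvec v X k) := by abel
  rw [hvk, map_add, oproj_mem _ hw, oproj_orth _ hu, add_zero]

lemma compr_apply_eq {X Y : Set (Fin n)} (hXY : X ⊆ Y) (A : Mat n) (μ : Fin n → ℂ)
    (hA : ∀ k, opOf A (v k) = μ k • v k) (x : Euc n) :
    compr (span ℂ (⇑v '' Y) ⊓ (span ℂ (⇑v '' X))ᗮ) A x
      = ∑ k, (v.repr (oproj (span ℂ (⇑v '' Y) ⊓ (span ℂ (⇑v '' X))ᗮ) x) k * μ k) • wvec v X k := by
  set E := span ℂ (⇑v '' Y) ⊓ (span ℂ (⇑v '' X))ᗮ with hE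
  set y := oproj E x with hy
  have hyE : y ∈ E := oproj_mem' _ _
  have h0 : compr E A x = oproj E (opOf A y) := rfl
  rw [h0, opOf_apply_eq_sum v A μ hA y, map_sum]
  refine Finset.sum_congr rfl fun k _ => ?_
  rw [_root_.map_smul]
  by_cases hk : k ∈ Y
  · rw [oproj_E_v v hXY hk]
  · have : v.repr y k = 0 := repr_zero_of_mem_span v hyE.1 hk
    simp [this]

lemma oproj_eq_sum {X Y : Set (Fin n)} (hXY : X ⊆ Y) (x : Euc n) :
    oproj (span ℂ (⇑v '' Y) ⊓ (span ℂ (⇑v '' X))ᗮ) x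
      = ∑ k, v.repr (oproj (span ℂ (⇑v '' Y) ⊓ (span ℂ (⇑v '' X))ᗮ) x) k • wvec v X k := by
  have hone : opOf (1 : Mat n) = 1 := _root_.map_one (Matrix.toEuclideanCLM (𝕜 := ℂ))
  have h1 : ∀ k, opOf (1 : Mat n) (v k) = (1 : ℂ) • v k := by
    intro k; rw [hone, one_smul]; rfl
  have h := compr_apply_eq v hXY (1 : Mat n) (fun _ => 1) h1 x
  set E := span ℂ (⇑v '' Y) ⊓ (span ℂ (⇑v '' X))ᗮ
  have h2 : compr E (1 : Mat n) x = oproj E x := by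
    show oproj E (opOf 1 (oproj E x)) = oproj E x
    rw [hone]
    exact oproj_mem _ (oproj_mem' _ _)
  rw [h2] at h
  simpa using h

lemma compr_wvec {X Y : Set (Fin n)} (hXY : X ⊆ Y) (A : Mat n) (μ : Fin n → ℂ)
    (hA : ∀ k, opOf A (v k) = μ k • v k) {k : Fin n} (hkY : k ∈ Y) (hkX : k ∉ X) :
    compr (span ℂ (⇑v '' Y) ⊓ (span ℂ (⇑v '' X))ᗮ) A (wvec v X k) = μ k • wvec v X k := by
  set E := span ℂ (⇑v '' Y) ⊓ (span ℂ (⇑v '' X))ᗮ with hE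
  have hw : wvec v X k ∈ E := ⟨wvec_mem_span v hXY hkY, wvec_mem_orth v X k⟩
  rw [compr_apply_eq v hXY A μ hA, oproj_mem _ hw]
  rw [Finset.sum_eq_single k ?_ (by simp)]
  · rw [repr_wvec v X k hkX, if_pos rfl, one_mul]
  · intro l _ hl
    by_cases hlX : l ∈ X
    · simp [wvec_zero v hlX]
    · rw [repr_wvec v X k hlX, if_neg (Ne.symm hl)]
      simp

end Aux

open Submodule in
/-- For a basis `v` of `ℂⁿ` (`n > 1`), `𝒟_v` is hereditarily antisymmetric if and only if
`v` is anti-orthogonal. -/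
theorem Dv_herAntisym_iff_antiOrth (n : ℕ) (hn : 1 < n) (v : Module.Basis (Fin n) ℂ (Euc n)) :
    HerAntisym (Dv v) ↔ AntiOrth v := by
  constructor
  · -- HerAntisym → AntiOrth
    intro hHer i j hij X hiX hjX
    intro h0
    have hne : i ≠ j := ne_of_lt hij
    have hXY : X ⊆ X ∪ {i, j} := Set.subset_union_left
    have hiY : i ∈ X ∪ {i, j} := by simp
    have hjY : j ∈ X ∪ {i, j} := by simp
    have hADv : mkDv v (fun k => if k = i then (1:ℂ) else 0) ∈ Dv v := mkDv_mem v _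
    set A := mkDv v (fun k => if k = i then (1:ℂ) else 0) with hA
    have hSemi : SemiInvariantSub (Dv v)
        (span ℂ (⇑v '' (X ∪ {i, j})) ⊓ (span ℂ (⇑v '' X))ᗮ) :=
      ⟨_, _, invariant_span v (X ∪ {i, j}), invariant_span v X,
        Submodule.span_mono (Set.image_mono hXY), rfl⟩
    set E := span ℂ (⇑v '' (X ∪ {i, j})) ⊓ (span ℂ (⇑v '' X))ᗮ with hE
    have hwiE : wvec v X i ∈ E := ⟨wvec_mem_span v hXY hiY, wvec_mem_orth v X i⟩
    have hwjE : wvec v X j ∈ E := ⟨wvec_mem_span v hXY hjY, wvec_mem_orth v X j⟩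
    have hform : ∀ x, compr E A x = v.repr (oproj E x) i • wvec v X i := by
      intro x
      have h := compr_apply_eq v hXY A _ (opOf_mkDv v (fun k => if k = i then (1:ℂ) else 0)) x
      rw [Finset.sum_eq_single i (fun l _ hl => by simp [hl]) (by simp)] at h
      simp only [eq_self_iff_true, if_true, mul_one] at h
      exact h
    have hwij : ⟪wvec v X i, wvec v X j⟫ = 0 := by
      rw [inner_wvec]; exact h0
    have hinner : ∀ z : Euc n,
        ⟪wvec v X i, z⟫ = v.repr (oproj E z) i * ⟪wvec v X i, wvec v X i⟫ := by
      intro z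
      have h1 : ⟪wvec v X i, z⟫ = ⟪wvec v X i, oproj E z⟫ := by
        conv_lhs => rw [← oproj_mem E hwiE]
        rw [inner_oproj]
      have hsum := oproj_eq_sum v hXY z
      rw [h1]
      conv_lhs => rw [hsum]
      rw [inner_sum]
      rw [Finset.sum_eq_single i ?_ (by simp)]
      · rw [inner_smul_right]
      · intro l _ hl
        rw [inner_smul_right]
        by_cases hlX : l ∈ X
        · rw [wvec_zero v hlX, inner_zero_right, mul_zero]
        · by_cases hlj : l = j
          · rw [hlj, hwij, mul_zero]
          · have hlY : l ∉ X ∪ ({i, j} : Set (Fin n)) := by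
              intro hmem
              rcases hmem with h | h
              · exact hlX h
              · have : l = i ∨ l = j := by simpa using h
                rcases this with h | h
                · exact hl h
                · exact hlj h
            rw [repr_zero_of_mem_span v (oproj_mem' E z).1 hlY, zero_mul]
    have hadj : compr E A = ContinuousLinearMap.adjoint (compr E A) := by
      rw [ContinuousLinearMap.eq_adjoint_iff]
      intro x y
      rw [hform x, hform y, inner_smul_left, inner_smul_right, hinner y]
      have hxw : ⟪x, wvec v X i⟫
          = (starRingEnd ℂ) (v.repr (oproj E x) i) * ⟪wvec v X i, wvec v X i⟫ := by
        rw [← inner_conj_symm, hinner x, _root_.map_mul, inner_conj_symm]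
      rw [hxw]
      ring
    obtain ⟨c, hc⟩ := hHer E hSemi A hADv A hADv hadj
    have h1 : compr E A (wvec v X i) = wvec v X i := by
      rw [hform, oproj_mem E hwiE, repr_wvec v X i hiX, if_pos rfl, one_smul]
    have h2 : compr E A (wvec v X j) = 0 := by
      rw [hform, oproj_mem E hwjE, repr_wvec v X j hiX, if_neg (Ne.symm hne), zero_smul]
    have e1 : wvec v X i = c • wvec v X i := by
      have h3 := DFunLike.congr_fun hc (wvec v X i)
      rw [h1, ContinuousLinearMap.smul_apply, oproj_mem E hwiE] at h3
      exact h3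
    have e2 : (0 : Euc n) = c • wvec v X j := by
      have h3 := DFunLike.congr_fun hc (wvec v X j)
      rw [h2, ContinuousLinearMap.smul_apply, oproj_mem E hwjE] at h3
      exact h3
    have hc1 : c = 1 := by
      by_contra hcne
      have h4 : (c - 1) • wvec v X i = 0 := by
        rw [sub_smul, one_smul, ← e1, sub_self]
      rcases smul_eq_zero.mp h4 with h | h
      · exact hcne (by rwa [sub_eq_zero] at h)
      · exact wvec_ne_zero v hiX h
    apply wvec_ne_zero v hjX
    rw [hc1, one_smul] at e2
    exact e2.symm
  · -- AntiOrth → HerAntisym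
    intro hAO E hSemi A hADv B hBDv hadj
    obtain ⟨E₁, E₂, h1, h2, hle, rfl⟩ := hSemi
    set Y := {k : Fin n | v k ∈ E₁} with hYdef
    set X := {k : Fin n | v k ∈ E₂} with hXdef
    have hE1 : E₁ = span ℂ (⇑v '' Y) := invariant_eq_span v h1
    have hE2 : E₂ = span ℂ (⇑v '' X) := invariant_eq_span v h2
    have hXY : X ⊆ Y := fun k hk => hle hk
    choose μ hμ using hADv
    choose ν hν using hBDv
    rw [hE1, hE2] at hadj ⊢
    by_cases hS : ∃ k₀, k₀ ∈ Y ∧ k₀ ∉ X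
    · obtain ⟨k₀, hk₀Y, hk₀X⟩ := hS
      have rel : ∀ k l : Fin n, k ∈ Y → k ∉ X → l ∈ Y → l ∉ X →
          ⟪wvec v X k, wvec v X l⟫ ≠ 0 → (starRingEnd ℂ) (μ k) = ν l := by
        intro k l hkY hkX hlY hlX hnz
        have e1 := compr_wvec v hXY A μ hμ hkY hkX
        have e2 := compr_wvec v hXY B ν hν hlY hlX
        have e3 : ⟪compr (span ℂ (⇑v '' Y) ⊓ (span ℂ (⇑v '' X))ᗮ) A (wvec v X k), wvec v X l⟫
            = ⟪wvec v X k, compr (span ℂ (⇑v '' Y) ⊓ (span ℂ (⇑v '' X))ᗮ) B (wvec v X l)⟫ := by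
          rw [hadj, ContinuousLinearMap.adjoint_inner_left]
        rw [e1, e2, inner_smul_left, inner_smul_right] at e3
        exact mul_right_cancel₀ hnz e3
      have nz : ∀ k l : Fin n, k ∉ X → l ∉ X → k ≠ l → ⟪wvec v X k, wvec v X l⟫ ≠ 0 := by
        intro k l hkX hlX hkl
        rcases lt_or_gt_of_ne hkl with h | h
        · rw [inner_wvec]; exact hAO k l h X hkX hlX
        · have hAO' : ⟪wvec v X l, v k⟫ ≠ 0 := hAO l k h X hlX hkX
          rw [inner_wvec]
          intro hzero
          apply hAO'
          have hcs : ⟪wvec v X l, wvec v X k⟫ = (starRingEnd ℂ) ⟪wvec v X k, wvec v X l⟫ :=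
            (inner_conj_symm (wvec v X l) (wvec v X k)).symm
          rw [← inner_wvec, hcs, inner_wvec, hzero, map_zero]
      have nzd : ⟪wvec v X k₀, wvec v X k₀⟫ ≠ 0 :=
        inner_self_ne_zero.mpr (wvec_ne_zero v hk₀X)
      have key : ∀ k, k ∈ Y → k ∉ X → μ k = μ k₀ := by
        intro k hkY hkX
        by_cases h : k = k₀
        · rw [h]
        · have r1 : (starRingEnd ℂ) (μ k) = ν k₀ :=
            rel k k₀ hkY hkX hk₀Y hk₀X (nz k k₀ hkX hk₀X h)
          have r2 : (starRingEnd ℂ) (μ k₀) = ν k₀ := rel k₀ k₀ hk₀Y hk₀X hk₀Y hk₀X nzd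
          have hcc := congrArg (starRingEnd ℂ) (r1.trans r2.symm)
          simpa using hcc
      refine ⟨μ k₀, ?_⟩
      refine ContinuousLinearMap.ext fun x => ?_
      rw [ContinuousLinearMap.smul_apply, compr_apply_eq v hXY A μ hμ x]
      conv_rhs => rw [oproj_eq_sum v hXY x]
      rw [Finset.smul_sum]
      refine Finset.sum_congr rfl fun k _ => ?_
      by_cases hkX : k ∈ X
      · rw [wvec_zero v hkX]; simp
      · by_cases hkY : k ∈ Y
        · rw [key k hkY hkX, smul_smul, mul_comm]
        · rw [repr_zero_of_mem_span v (oproj_mem' (span ℂ (⇑v '' Y) ⊓ (span ℂ (⇑v '' X))ᗮ) x).1 hkY]; simp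
    · push_neg at hS
      refine ⟨0, ?_⟩
      refine ContinuousLinearMap.ext fun x => ?_
      rw [ContinuousLinearMap.smul_apply, compr_apply_eq v hXY A μ hμ x, zero_smul]
      refine Finset.sum_eq_zero fun k _ => ?_
      by_cases hk : k ∈ X
      · rw [wvec_zero v hk, smul_zero]
      · have hkY : k ∉ Y := fun h => hk (hS k h)
        rw [repr_zero_of_mem_span v (oproj_mem' (span ℂ (⇑v '' Y) ⊓ (span ℂ (⇑v '' X))ᗮ) x).1 hkY, zero_mul, zero_smul]
end
end

section
/- Let v = (v₁,…,vₙ) be a basis of ℂⁿ and for 1 ≤ i,j ≤ n let E_{ij} ∈ Mₙ(ℂ) be the unique linear operator with E_{ij} v_k = v_i if k = j and E_{ij} v_k = 0 if k ≠ j. Then: (a) for every preorder ⪯ on {1,…,n} (a reflexive transitive relation), the linear span of {E_{ij} : i ⪯ j} is an operator algebra containing 𝒟_v = span{E_{11},…,E_{nn}}; and (b) conversely, every operator algebra in Mₙ(ℂ) containing 𝒟_v equals span{E_{ij} : i ⪯ j} for some preorder ⪯ on {1,…,n}. -/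
open Matrix ContinuousLinearMap

noncomputable section

lemma opOf_mul_apply {n : ℕ} (A B : Mat n) (x : Euc n) :
    opOf (A * B) x = opOf A (opOf B x) := by
  rw [opOf, _root_.map_mul]; rfl

lemma opOf_smul {n : ℕ} (c : ℂ) (A : Mat n) : opOf (c • A) = c • opOf A := by
  rw [opOf, _root_.map_smul]; rfl

lemma opOf_zero {n : ℕ} : opOf (0 : Mat n) = 0 := by
  rw [opOf, map_zero]

lemma opOf_sum {n : ℕ} {ι : Type*} (s : Finset ι) (f : ι → Mat n) :
    opOf (∑ i ∈ s, f i) = ∑ i ∈ s, opOf (f i) :=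
  map_sum (Matrix.toEuclideanCLM (𝕜 := ℂ) (n := Fin n)) f s

lemma matEq {n : ℕ} (v : Module.Basis (Fin n) ℂ (Euc n)) (A B : Mat n)
    (h : ∀ k, opOf A (v k) = opOf B (v k)) : A = B := by
  have h2 : opOf A = opOf B := ContinuousLinearMap.coe_injective (v.ext h)
  have := (Matrix.toEuclideanCLM (𝕜 := ℂ) (n := Fin n)).injective
  exact this h2

lemma Emul {n : ℕ} (v : Module.Basis (Fin n) ℂ (Euc n)) (E : Fin n → Fin n → Mat n)
    (hE : ∀ i j k : Fin n, opOf (E i j) (v k) = if k = j then v i else 0)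
    (i j k l : Fin n) :
    E i j * E k l = if j = k then E i l else (0 : Mat n) := by
  apply matEq v
  intro m
  rw [opOf_mul_apply, hE]
  by_cases hml : m = l <;> by_cases hjk : j = k <;>
    simp [hml, hjk, hE, opOf_zero, eq_comm]

/-- Fix a basis `v` of `ℂⁿ` and the matrix units `E i j` for this basis (`E i j` sends `v j`
to `v i` and annihilates the other basis vectors). Then (a) for every preorder `⪯` on
`{1,…,n}`, `span{E i j : i ⪯ j}` is an operator algebra containing
`𝒟_v = span{E 1 1, …, E n n}`; and (b) every operator algebra containing `𝒟_v` is of this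
form for some preorder. -/
theorem opAlg_containing_Dv_iff_preorder (n : ℕ) (v : Module.Basis (Fin n) ℂ (Euc n))
    (E : Fin n → Fin n → Mat n)
    (hE : ∀ i j k : Fin n, opOf (E i j) (v k) = if k = j then v i else 0) :
    (∀ r : Fin n → Fin n → Prop, (∀ i, r i i) → (∀ i j k, r i j → r j k → r i k) →
      IsOpAlg (Submodule.span ℂ {M : Mat n | ∃ i j, r i j ∧ M = E i j} : Set (Mat n)) ∧
        (Submodule.span ℂ {M : Mat n | ∃ i, M = E i i} : Set (Mat n)) ⊆
          (Submodule.span ℂ {M : Mat n | ∃ i j, r i j ∧ M = E i j} : Set (Mat n))) ∧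
    (∀ S : Set (Mat n), IsOpAlg S →
      (Submodule.span ℂ {M : Mat n | ∃ i, M = E i i} : Set (Mat n)) ⊆ S →
      ∃ r : Fin n → Fin n → Prop, (∀ i, r i i) ∧ (∀ i j k, r i j → r j k → r i k) ∧
        S = (Submodule.span ℂ {M : Mat n | ∃ i j, r i j ∧ M = E i j} : Set (Mat n))) := by
  constructor
  · -- part (a)
    intro r hrefl htrans
    set P := Submodule.span ℂ {M : Mat n | ∃ i j, r i j ∧ M = E i j} with hP
    refine ⟨⟨P.zero_mem, fun A hA B hB => P.add_mem hA hB,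
        fun c A hA => P.smul_mem c hA, ?_⟩, ?_⟩
    · -- mul closure
      intro A hA B hB
      refine Submodule.span_induction₂
        (p := fun A B _ _ => A * B ∈ P) ?_ ?_ ?_ ?_ ?_ ?_ ?_ hA hB
      · rintro _ _ ⟨i, j, hij, rfl⟩ ⟨k, l, hkl, rfl⟩
        rw [Emul v E hE]
        by_cases hjk : j = k
        · subst hjk
          simp only [if_pos rfl]
          exact Submodule.subset_span ⟨i, l, htrans i j l hij hkl, rfl⟩
        · simp only [if_neg hjk]
          exact P.zero_mem
      · intro y _; rw [zero_mul]; exact P.zero_mem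
      · intro x _; rw [mul_zero]; exact P.zero_mem
      · intro x y z _ _ _ h1 h2; rw [add_mul]; exact P.add_mem h1 h2
      · intro x y z _ _ _ h1 h2; rw [mul_add]; exact P.add_mem h1 h2
      · intro c x y _ _ h; rw [smul_mul_assoc]; exact P.smul_mem c h
      · intro c x y _ _ h; rw [mul_smul_comm]; exact P.smul_mem c h
    · -- containment of D_v
      have : Submodule.span ℂ {M : Mat n | ∃ i, M = E i i} ≤ P := by
        rw [Submodule.span_le]
        rintro _ ⟨i, rfl⟩
        exact Submodule.subset_span ⟨i, i, hrefl i, rfl⟩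
      exact this
  · -- part (b)
    intro S hS hD
    obtain ⟨h0, hadd, hsmul, hmul⟩ := hS
    have hdiag : ∀ i, E i i ∈ S := fun i =>
      hD (Submodule.subset_span ⟨i, rfl⟩)
    refine ⟨fun i j => E i j ∈ S, hdiag, ?_, ?_⟩
    · intro i j k h1 h2
      have := hmul _ h1 _ h2
      rwa [Emul v E hE, if_pos rfl] at this
    · set P := Submodule.span ℂ {M : Mat n | ∃ i j, E i j ∈ S ∧ M = E i j} with hP
      apply Set.Subset.antisymm
      · -- S ⊆ P
        intro A hA
        set c : Fin n → Fin n → ℂ := fun i j => v.repr (opOf A (v j)) i with hc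
        have hrepr : ∀ j, opOf A (v j) = ∑ l, c l j • v l := by
          intro j
          exact (v.sum_repr (opOf A (v j))).symm
        have hrep : A = ∑ i, ∑ j, c i j • E i j := by
          apply matEq v
          intro k
          rw [opOf_sum]
          rw [ContinuousLinearMap.sum_apply]
          have : ∀ i, (opOf (∑ j, c i j • E i j)) (v k) = c i k • v i := by
            intro i
            rw [opOf_sum, ContinuousLinearMap.sum_apply]
            simp only [opOf_smul, ContinuousLinearMap.smul_apply, hE, smul_ite, smul_zero]
            simp [eq_comm]
          rw [Finset.sum_congr rfl (fun i _ => this i)]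
          rw [hrepr k]
        have hcomp : ∀ i j, E i i * A * E j j = c i j • E i j := by
          intro i j
          apply matEq v
          intro m
          rw [opOf_mul_apply, opOf_mul_apply, hE, opOf_smul,
            ContinuousLinearMap.smul_apply, hE]
          by_cases hmj : m = j
          · simp only [if_pos hmj]
            rw [hrepr j, map_sum]
            simp only [ContinuousLinearMap.map_smul, hE, smul_ite, smul_zero]
            simp
          · simp only [if_neg hmj, map_zero, smul_zero]
        rw [hrep]
        refine Submodule.sum_mem _ (fun i _ => Submodule.sum_mem _ (fun j _ => ?_))
        by_cases hc0 : c i j = 0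
        · rw [hc0, zero_smul]; exact P.zero_mem
        · refine P.smul_mem _ (Submodule.subset_span ⟨i, j, ?_, rfl⟩)
          have h1 : E i i * A * E j j ∈ S := hmul _ (hmul _ (hdiag i) _ hA) _ (hdiag j)
          rw [hcomp i j] at h1
          have h2 := hsmul (c i j)⁻¹ _ h1
          rwa [smul_smul, inv_mul_cancel₀ hc0, one_smul] at h2
      · -- P ⊆ S
        let S' : Submodule ℂ (Mat n) :=
          { carrier := S
            add_mem' := fun ha hb => hadd _ ha _ hb
            zero_mem' := h0
            smul_mem' := fun cc A ha => hsmul cc A ha }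
        have : P ≤ S' := by
          rw [hP, Submodule.span_le]
          rintro _ ⟨i, j, hij, rfl⟩
          exact hij
        exact this
end
end

section
/- Let v = (v₁,…,vₙ) be an anti-orthogonal basis of ℂⁿ and let 𝒟_v ⊆ Mₙ(ℂ) be the set of all matrices for which each vᵢ is an eigenvector. Then 𝒟_v is a maximal hereditarily antisymmetric operator algebra: 𝒟_v is hereditarily antisymmetric, and no operator algebra in Mₙ(ℂ) properly containing 𝒟_v is hereditarily antisymmetric. -/
open Matrix ContinuousLinearMap

noncomputable section

namespace DvAux

local notation "⟪" x ", " y "⟫" => @inner ℂ _ _ x y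

variable {n : ℕ}

lemma opOf_mul (A B : Mat n) : opOf (A * B) = opOf A ∘L opOf B := by
  simp [opOf, _root_.map_mul]; rfl

lemma opOf_zero : opOf (0 : Mat n) = 0 := by simp [opOf]

lemma opOf_add (A B : Mat n) : opOf (A + B) = opOf A + opOf B := by simp [opOf]

lemma opOf_smul (c : ℂ) (A : Mat n) : opOf (c • A) = c • opOf A := by simp [opOf]

def mk (f : Euc n →L[ℂ] Euc n) : Mat n := (Matrix.toEuclideanCLM (𝕜 := ℂ)).symm f

lemma opOf_mk (f : Euc n →L[ℂ] Euc n) : opOf (mk f) = f := by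
  simp [opOf, mk]

variable (v : Module.Basis (Fin n) ℂ (Euc n))

def amat (g : Fin n → Euc n) : Mat n :=
  mk (LinearMap.toContinuousLinearMap (v.constr ℂ g))

lemma op_amat (g : Fin n → Euc n) (i : Fin n) : opOf (amat v g) (v i) = g i := by
  simp [amat, opOf_mk, Module.Basis.constr_basis]

lemma clm_apply_repr (f : Euc n →L[ℂ] Euc n) (x : Euc n) :
    f x = ∑ i, v.repr x i • f (v i) := by
  conv_lhs => rw [← v.sum_repr x]
  rw [map_sum]
  simp

def umat (j k : Fin n) : Mat n := amat v (fun m => if m = k then v j else 0)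

lemma op_umat_basis (j k m : Fin n) :
    opOf (umat v j k) (v m) = if m = k then v j else 0 := op_amat v _ m

lemma op_umat (j k : Fin n) (x : Euc n) :
    opOf (umat v j k) x = v.repr x k • v j := by
  rw [clm_apply_repr v _ x]
  simp only [op_umat_basis, smul_ite, smul_zero]
  simp [Finset.sum_ite_eq']

lemma umat_diag_mem_Dv (m : Fin n) : umat v m m ∈ Dv v := by
  intro i
  refine ⟨if i = m then 1 else 0, ?_⟩
  rw [op_umat_basis]
  by_cases h : i = m <;> simp [h]

def dmat (μ : Fin n → ℂ) : Mat n := amat v (fun i => μ i • v i)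

lemma op_dmat_basis (μ : Fin n → ℂ) (i : Fin n) :
    opOf (dmat v μ) (v i) = μ i • v i := op_amat v _ i

lemma dmat_mem_Dv (μ : Fin n → ℂ) : dmat v μ ∈ Dv v :=
  fun i => ⟨μ i, op_dmat_basis v μ i⟩

lemma repr_span {Z : Set (Fin n)} {x : Euc n} (hx : x ∈ Submodule.span ℂ (⇑v '' Z))
    {m : Fin n} (hm : m ∉ Z) : v.repr x m = 0 := by
  induction hx using Submodule.span_induction with
  | mem y hy =>
    obtain ⟨i, hi, rfl⟩ := hy
    simp [Module.Basis.repr_self, Finsupp.single_apply_eq_zero]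
    rintro rfl; exact (hm hi).elim
  | zero => simp
  | add y z _ _ hy hz => simp [hy, hz]
  | smul c y _ hy => simp [hy]

lemma dv_inv {A : Mat n} (hA : A ∈ Dv v) (Z : Set (Fin n)) :
    ∀ x ∈ Submodule.span ℂ (⇑v '' Z), opOf A x ∈ Submodule.span ℂ (⇑v '' Z) := by
  intro x hx
  induction hx using Submodule.span_induction with
  | mem y hy =>
    obtain ⟨i, hi, rfl⟩ := hy
    obtain ⟨μ, hμ⟩ := hA i
    rw [hμ]
    exact Submodule.smul_mem _ _ (Submodule.subset_span ⟨i, hi, rfl⟩)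
  | zero => simp
  | add y z _ _ hy hz => rw [map_add]; exact Submodule.add_mem _ hy hz
  | smul c y _ hy => rw [_root_.map_smul]; exact Submodule.smul_mem _ _ hy

end DvAux

namespace DvAux

open Submodule

local notation "⟪" x ", " y "⟫" => @inner ℂ _ _ x y

variable {n : ℕ} (v : Module.Basis (Fin n) ℂ (Euc n))

lemma oproj_mem (K : Submodule ℂ (Euc n)) (x : Euc n) : oproj K x ∈ K := by
  simp [oproj]

lemma oproj_of_mem {K : Submodule ℂ (Euc n)} {x : Euc n} (h : x ∈ K) : oproj K x = x := by
  exact K.starProjection_eq_self_iff.mpr h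

lemma oproj_of_orth {K : Submodule ℂ (Euc n)} {x : Euc n} (h : x ∈ Kᗮ) : oproj K x = 0 := by
  simp [oproj, Submodule.orthogonalProjectionOnto_apply_of_mem_orthogonal h]

lemma oproj_inner (K : Submodule ℂ (Euc n)) (x y : Euc n) :
    ⟪oproj K x, y⟫ = ⟪x, oproj K y⟫ := by
  exact K.inner_starProjection_left_eq_right x y

variable (X Y : Set (Fin n))

/-- `w k` : the projection of `v k` onto the orthocomplement of the span of `v '' X`. -/
def wv (k : Fin n) : Euc n := oproj ((span ℂ (⇑v '' X))ᗮ) (v k)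

/-- The subspace `span(v '' Y) ⊓ span(v '' X)ᗮ`. -/
def Esub : Submodule ℂ (Euc n) := span ℂ (⇑v '' Y) ⊓ (span ℂ (⇑v '' X))ᗮ

lemma wv_mem_orth (k : Fin n) : wv v X k ∈ (span ℂ (⇑v '' X))ᗮ := oproj_mem _ _

lemma sub_wv_mem (k : Fin n) : v k - wv v X k ∈ span ℂ (⇑v '' X) := by
  have h : v k - wv v X k ∈ ((span ℂ (⇑v '' X))ᗮ)ᗮ :=
    Submodule.sub_starProjection_mem_orthogonal (K := (span ℂ (⇑v '' X))ᗮ) (v k)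
  rwa [Submodule.orthogonal_orthogonal] at h

lemma wv_of_mem {k : Fin n} (hk : k ∈ X) : wv v X k = 0 := by
  apply oproj_of_orth
  exact Submodule.le_orthogonal_orthogonal _ (subset_span ⟨k, hk, rfl⟩)

variable {X Y}

lemma wv_mem_E (hXY : X ⊆ Y) {k : Fin n} (hk : k ∈ Y) : wv v X k ∈ Esub v X Y := by
  constructor
  · have h1 : v k ∈ span ℂ (⇑v '' Y) := subset_span ⟨k, hk, rfl⟩
    have h2 := sub_wv_mem v X k
    have h3 : v k - wv v X k ∈ span ℂ (⇑v '' Y) :=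
      span_mono (Set.image_mono hXY) h2
    have := Submodule.sub_mem _ h1 h3
    simpa using this
  · exact wv_mem_orth v X k

lemma spanX_le_Eorth : span ℂ (⇑v '' X) ≤ (Esub v X Y)ᗮ := by
  intro s hs
  rw [Submodule.mem_orthogonal]
  intro u hu
  have : u ∈ (span ℂ (⇑v '' X))ᗮ := hu.2
  exact (Submodule.mem_orthogonal' _ _).mp this s hs

lemma P_v (hXY : X ⊆ Y) {k : Fin n} (hk : k ∈ Y) : oproj (Esub v X Y) (v k) = wv v X k := by
  have h : v k = wv v X k + (v k - wv v X k) := by abel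
  rw [h, map_add, oproj_of_mem (wv_mem_E v hXY hk),
    oproj_of_orth (spanX_le_Eorth v (Y := Y) (sub_wv_mem v X k)), add_zero]

lemma E_expand {u : Euc n} (hu : u ∈ Esub v X Y) :
    u = ∑ m, v.repr u m • wv v X m := by
  have h1 : oproj ((span ℂ (⇑v '' X))ᗮ) u = u := oproj_of_mem hu.2
  conv_lhs => rw [← h1, clm_apply_repr v _ u]
  rfl

lemma wv_ne_zero {k : Fin n} (hk : k ∉ X) : wv v X k ≠ 0 := by
  intro h
  have : v k ∈ span ℂ (⇑v '' X) := by
    have := sub_wv_mem v X k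
    rwa [h, sub_zero] at this
  have := repr_span v this hk
  simp at this

lemma gram_ne (hv : AntiOrth v) {k l : Fin n} (hkX : k ∉ X) (hlX : l ∉ X) :
    ⟪wv v X k, wv v X l⟫ ≠ 0 := by
  have key : ∀ a b : Fin n, ⟪wv v X a, wv v X b⟫ = ⟪wv v X a, v b⟫ := by
    intro a b
    have h1 : oproj ((span ℂ (⇑v '' X))ᗮ) (wv v X a) = wv v X a :=
      oproj_of_mem (wv_mem_orth v X a)
    calc ⟪wv v X a, wv v X b⟫ = ⟪oproj ((span ℂ (⇑v '' X))ᗮ) (wv v X a), v b⟫ := by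
          rw [oproj_inner]; rfl
      _ = ⟪wv v X a, v b⟫ := by rw [h1]
  rcases lt_trichotomy k l with h | h | h
  · rw [key]; exact hv k l h X hkX hlX
  · subst h
    rw [inner_self_ne_zero]
    exact wv_ne_zero v hkX
  · intro hc
    have h2 := hv l k h X hlX hkX
    apply h2
    show ⟪wv v X l, v k⟫ = 0
    rw [← key, ← inner_conj_symm, hc, map_zero]

end DvAux

namespace DvAux

open Submodule

local notation "⟪" x ", " y "⟫" => @inner ℂ _ _ x y

variable {n : ℕ} (v : Module.Basis (Fin n) ℂ (Euc n))

lemma inv_span (F : Submodule ℂ (Euc n)) (hF : InvariantSub (Dv v) F) :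
    F = span ℂ (⇑v '' {k | v k ∈ F}) := by
  apply le_antisymm
  · intro x hx
    have hx2 : x = ∑ m, v.repr x m • v m := (v.sum_repr x).symm
    rw [hx2]
    apply Submodule.sum_mem
    intro m _
    by_cases hm : v.repr x m = 0
    · simp [hm]
    · have h1 : opOf (umat v m m) x ∈ F := hF _ (umat_diag_mem_Dv v m) x hx
      rw [op_umat] at h1
      have h2 : v m ∈ F := by
        have := Submodule.smul_mem F (v.repr x m)⁻¹ h1
        rwa [smul_smul, inv_mul_cancel₀ hm, one_smul] at this
      exact Submodule.smul_mem _ _ (Submodule.subset_span ⟨m, h2, rfl⟩)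
  · rw [Submodule.span_le]; rintro y ⟨k, hk, rfl⟩; exact hk

lemma herAntisym_Dv (hv : AntiOrth v) : HerAntisym (Dv v) := by
  intro E hE A hA B hB hAB
  obtain ⟨E₁, E₂, hI1, hI2, hle, rfl⟩ := hE
  set X : Set (Fin n) := {k | v k ∈ E₂} with hXdef
  set Y : Set (Fin n) := {k | v k ∈ E₁} with hYdef
  have hXY : X ⊆ Y := fun k hk => hle hk
  have hEeq : E₁ ⊓ E₂ᗮ = Esub v X Y := by
    rw [inv_span v E₁ hI1, inv_span v E₂ hI2]; rfl
  rw [hEeq] at hAB ⊢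
  set E := Esub v X Y with hEdef
  have hA' : ∀ i, ∃ c : ℂ, opOf A (v i) = c • v i := hA
  have hB' : ∀ i, ∃ c : ℂ, opOf B (v i) = c • v i := hB
  choose μ hμ using hA'
  choose ν hν using hB'
  -- compression acts diagonally on the w's
  have comprD : ∀ (C : Mat n), C ∈ Dv v → ∀ (γ : Fin n → ℂ),
      (∀ i, opOf C (v i) = γ i • v i) →
      ∀ k, k ∈ Y → compr E C (wv v X k) = γ k • wv v X k := by
    intro C hC γ hγ k hkY
    have hw : oproj E (wv v X k) = wv v X k := oproj_of_mem (wv_mem_E v hXY hkY)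
    have hsplit : wv v X k = v k - (v k - wv v X k) := by abel
    have hs : opOf C (v k - wv v X k) ∈ span ℂ (⇑v '' X) :=
      dv_inv v hC X _ (sub_wv_mem v X k)
    show oproj E (opOf C (oproj E (wv v X k))) = γ k • wv v X k
    rw [hw]
    conv_lhs => rw [hsplit, map_sub, hγ k]
    rw [map_sub, _root_.map_smul, P_v v hXY hkY,
      oproj_of_orth (spanX_le_Eorth v (Y := Y) hs), sub_zero]
  -- pairing identity
  have pair : ∀ k, k ∈ Y → k ∉ X → ∀ l, l ∈ Y → l ∉ X →
      (starRingEnd ℂ) (μ k) = ν l := by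
    intro k hkY hkX l hlY hlX
    have h1 : ⟪compr E A (wv v X k), wv v X l⟫ = ⟪wv v X k, compr E B (wv v X l)⟫ := by
      rw [hAB, ContinuousLinearMap.adjoint_inner_left]
    rw [comprD A hA μ hμ k hkY, comprD B hB ν hν l hlY,
      inner_smul_left, inner_smul_right] at h1
    exact mul_right_cancel₀ (gram_ne v hv hkX hlX) h1
  by_cases hG : ∃ k, k ∈ Y ∧ k ∉ X
  · obtain ⟨k₀, hk₀Y, hk₀X⟩ := hG
    refine ⟨μ k₀, ContinuousLinearMap.ext fun x => ?_⟩
    have hu : oproj E x ∈ E := oproj_mem E x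
    show oproj E (opOf A (oproj E x)) = μ k₀ • oproj E x
    set u := oproj E x with hudef
    have h1 : opOf A u = ∑ m, v.repr u m • (μ m • v m) := by
      rw [clm_apply_repr v (opOf A) u]
      exact Finset.sum_congr rfl fun m _ => by rw [hμ m]
    rw [h1, map_sum]
    have h2 : ∀ m : Fin n, m ∈ Finset.univ →
        oproj E (v.repr u m • (μ m • v m)) = μ k₀ • (v.repr u m • wv v X m) := by
      intro m _
      rw [_root_.map_smul, _root_.map_smul]
      by_cases hmY : m ∈ Y
      · rw [P_v v hXY hmY]
        by_cases hmX : m ∈ X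
        · rw [wv_of_mem v X hmX]; simp
        · have : μ m = μ k₀ := by
            have e1 := pair m hmY hmX k₀ hk₀Y hk₀X
            have e2 := pair k₀ hk₀Y hk₀X k₀ hk₀Y hk₀X
            have := e1.trans e2.symm
            exact star_injective this
          rw [this, smul_comm]
      · have : v.repr u m = 0 := repr_span v hu.1 hmY
        simp [this]
    rw [Finset.sum_congr rfl h2, ← Finset.smul_sum, ← E_expand v hu]
  · refine ⟨0, ContinuousLinearMap.ext fun x => ?_⟩
    have hu : oproj E x ∈ E := oproj_mem E x
    have hu0 : oproj E x = 0 := by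
      rw [E_expand v hu]
      apply Finset.sum_eq_zero
      intro m _
      by_cases hmY : m ∈ Y
      · by_cases hmX : m ∈ X
        · rw [wv_of_mem v X hmX]; simp
        · exact absurd ⟨m, hmY, hmX⟩ hG
      · rw [repr_span v (oproj_mem E x).1 hmY]; simp
    show oproj E (opOf A (oproj E x)) = (0 : ℂ) • oproj E x
    rw [hu0]
    simp

end DvAux

namespace DvAux

open Submodule

local notation "⟪" x ", " y "⟫" => @inner ℂ _ _ x y

variable {n : ℕ} (v : Module.Basis (Fin n) ℂ (Euc n)) (S : Set (Mat n))

/-- `a → b` : some element of `S` sends `v a` to a vector with nonzero `b`-coefficient. -/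
def Step (a b : Fin n) : Prop := ∃ A ∈ S, v.repr (opOf A (v a)) b ≠ 0

/-- `S` contains a nonzero multiple of the "matrix unit" `v k ↦ v j`. -/
def Uu (j k : Fin n) : Prop :=
  ∃ N ∈ S, ∃ c : ℂ, c ≠ 0 ∧ opOf N = c • opOf (umat v j k)

variable {v S}

lemma U_refl (hDS : Dv v ⊆ S) (a : Fin n) : Uu v S a a :=
  ⟨umat v a a, hDS (umat_diag_mem_Dv v a), 1, one_ne_zero, (one_smul _ _).symm⟩

lemma U_step (hS : IsOpAlg S) (hDS : Dv v ⊆ S) {a b : Fin n} (h : Step v S a b) :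
    Uu v S b a := by
  obtain ⟨A, hA, hc⟩ := h
  refine ⟨umat v b b * (A * umat v a a),
    hS.2.2.2 _ (hDS (umat_diag_mem_Dv v b)) _ (hS.2.2.2 _ hA _ (hDS (umat_diag_mem_Dv v a))),
    v.repr (opOf A (v a)) b, hc, ?_⟩
  refine ContinuousLinearMap.ext fun x => ?_
  rw [opOf_mul, opOf_mul]
  simp only [ContinuousLinearMap.comp_apply, ContinuousLinearMap.smul_apply, op_umat,
    _root_.map_smul, Finsupp.smul_apply, smul_eq_mul, smul_smul]
  rw [mul_comm]

lemma U_trans (hS : IsOpAlg S) {a b c : Fin n} (h1 : Uu v S b a) (h2 : Uu v S c b) :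
    Uu v S c a := by
  obtain ⟨N, hN, c₁, hc₁, hop1⟩ := h1
  obtain ⟨N', hN', c₂, hc₂, hop2⟩ := h2
  refine ⟨N' * N, hS.2.2.2 _ hN' _ hN, c₂ * c₁, mul_ne_zero hc₂ hc₁, ?_⟩
  refine ContinuousLinearMap.ext fun x => ?_
  rw [opOf_mul]
  simp only [ContinuousLinearMap.comp_apply, hop1, hop2,
    ContinuousLinearMap.smul_apply, op_umat, _root_.map_smul,
    Finsupp.smul_apply, smul_eq_mul, Module.Basis.repr_self, Finsupp.single_eq_same, smul_smul]
  congr 1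
  ring

lemma U_of_reach (hS : IsOpAlg S) (hDS : Dv v ⊆ S) {a b : Fin n}
    (h : Relation.ReflTransGen (Step v S) a b) : Uu v S b a := by
  induction h with
  | refl => exact U_refl hDS a
  | tail _ hstep ih => exact U_trans hS ih (U_step hS hDS hstep)

lemma closed_invariant (Z : Set (Fin n))
    (hZ : ∀ a ∈ Z, ∀ b, Step v S a b → b ∈ Z) :
    InvariantSub S (span ℂ (⇑v '' Z)) := by
  intro A hA x hx
  induction hx using Submodule.span_induction with
  | mem y hy =>
    obtain ⟨a, ha, rfl⟩ := hy
    rw [← v.sum_repr (opOf A (v a))]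
    apply Submodule.sum_mem
    intro b _
    by_cases hb : v.repr (opOf A (v a)) b = 0
    · simp [hb]
    · exact Submodule.smul_mem _ _
        (Submodule.subset_span ⟨b, hZ a ha b ⟨A, hA, hb⟩, rfl⟩)
  | zero => simp
  | add y z _ _ hy hz => rw [map_add]; exact Submodule.add_mem _ hy hz
  | smul c y _ hy => rw [_root_.map_smul]; exact Submodule.smul_mem _ _ hy

lemma sum_units_mem (hS : IsOpAlg S) (j₀ : Fin n) (F : Finset (Fin n))
    (hF : ∀ k ∈ F, Uu v S j₀ k) (t : Fin n → ℂ) :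
    ∃ A ∈ S, opOf A = ∑ k ∈ F, t k • opOf (umat v j₀ k) := by
  classical
  induction F using Finset.induction with
  | empty => exact ⟨0, hS.1, by simp [opOf_zero]⟩
  | insert _ _ ha ih =>
    rename_i a F'
    obtain ⟨A', hA', hopA'⟩ := ih (fun k hk => hF k (Finset.mem_insert_of_mem hk))
    obtain ⟨N, hN, c, hc, hopN⟩ := hF a (Finset.mem_insert_self a F')
    refine ⟨(t a * c⁻¹) • N + A', hS.2.1 _ (hS.2.2.1 _ _ hN) _ hA', ?_⟩
    rw [opOf_add, opOf_smul, hopN, hopA', Finset.sum_insert ha, smul_smul,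
      mul_assoc, inv_mul_cancel₀ hc, mul_one]

lemma not_herAntisym (hv : AntiOrth v) (hS : IsOpAlg S) (hDS : Dv v ⊆ S)
    {T : Mat n} (hT : T ∈ S) (hTD : T ∉ Dv v) : ¬ HerAntisym S := by
  classical
  intro hHer
  -- find a nontrivial step
  have hstep0 : ∃ a b : Fin n, b ≠ a ∧ Step v S a b := by
    simp only [Dv, Set.mem_setOf_eq, not_forall] at hTD
    obtain ⟨a, ha⟩ := hTD
    refine ⟨a, ?_⟩
    by_contra hcon
    push_neg at hcon
    have hTa : opOf T (v a) = v.repr (opOf T (v a)) a • v a := by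
      conv_lhs => rw [← v.sum_repr (opOf T (v a))]
      apply Finset.sum_eq_single
      · intro b _ hb
        have hb0 : v.repr (opOf T (v a)) b = 0 := by
          by_contra hne
          exact hcon b hb ⟨T, hT, hne⟩
        simp [hb0]
      · intro h; exact absurd (Finset.mem_univ a) h
    exact ha ⟨_, hTa⟩
  obtain ⟨a₀, b₀, hb₀ne, hstep⟩ := hstep0
  -- reachability
  set r : Fin n → Fin n → Prop := Relation.ReflTransGen (Step v S) with hr
  set Rch : Fin n → Finset (Fin n) := fun a => Finset.univ.filter (fun x => r a x) with hRch
  set V₀ : Finset (Fin n) := Finset.univ.filter (fun a => ∃ b, b ≠ a ∧ Step v S a b) with hV₀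
  have hV₀ne : V₀.Nonempty := ⟨a₀, by simp [hV₀, Finset.mem_filter]; exact ⟨b₀, hb₀ne, hstep⟩⟩
  obtain ⟨i₀, hi₀V, hmin⟩ := V₀.exists_min_image (fun a => (Rch a).card) hV₀ne
  have hi₀V' : ∃ b, b ≠ i₀ ∧ Step v S i₀ b := by
    simpa [hV₀, Finset.mem_filter] using hi₀V
  obtain ⟨j₀, hj₀ne, hj₀step⟩ := hi₀V'
  have hmax : ∀ k, r i₀ k → (∃ b, b ≠ k ∧ Step v S k b) → r k i₀ := by
    intro k hik hkV
    have hsub : Rch k ⊆ Rch i₀ := by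
      intro x hx
      simp only [hRch, Finset.mem_filter, Finset.mem_univ, true_and] at hx ⊢
      exact hik.trans hx
    have hcard : (Rch i₀).card ≤ (Rch k).card :=
      hmin k (by simp [hV₀, Finset.mem_filter]; exact hkV)
    have heq : Rch k = Rch i₀ := Finset.eq_of_subset_of_card_le hsub hcard
    have : i₀ ∈ Rch i₀ := by
      simp [hRch, Finset.mem_filter]
      exact Relation.ReflTransGen.refl
    rw [← heq] at this
    simpa [hRch, Finset.mem_filter] using this
  -- the subspaces
  set Y : Set (Fin n) := {k | r i₀ k} with hY
  set C : Set (Fin n) := {k | r i₀ k ∧ r k i₀} with hC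
  set X : Set (Fin n) := Y \ (C ∪ {j₀}) with hX
  have hi₀Y : i₀ ∈ Y := Relation.ReflTransGen.refl
  have hi₀C : i₀ ∈ C := ⟨Relation.ReflTransGen.refl, Relation.ReflTransGen.refl⟩
  have hj₀Y : j₀ ∈ Y := Relation.ReflTransGen.single hj₀step
  have hXY : X ⊆ Y := fun k hk => hk.1
  have hi₀X : i₀ ∉ X := fun h => h.2 (Or.inl hi₀C)
  have hj₀X : j₀ ∉ X := fun h => h.2 (Or.inr rfl)
  have hYcl : ∀ a ∈ Y, ∀ b, Step v S a b → b ∈ Y :=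
    fun a ha b hab => Relation.ReflTransGen.tail ha hab
  have hXcl : ∀ a ∈ X, ∀ b, Step v S a b → b ∈ X := by
    rintro a ⟨haY, haG⟩ b hab
    refine ⟨hYcl a haY b hab, ?_⟩
    rintro (hbC | hbj)
    · exact haG (Or.inl ⟨haY, (Relation.ReflTransGen.single hab).trans hbC.2⟩)
    · have hbj' : b = j₀ := hbj
      have haj : a ≠ j₀ := fun h => haG (Or.inr h)
      have hba : b ≠ a := by rw [hbj']; exact fun h => haj h.symm
      have hai : r a i₀ := hmax a haY ⟨b, hba, hab⟩
      exact haG (Or.inl ⟨haY, hai⟩)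
  -- units into j₀
  have hU : ∀ k, k ∈ Y → k ∉ X → Uu v S j₀ k := by
    intro k hkY hkX
    have hkG : k ∈ C ∪ {j₀} := by
      by_contra h
      exact hkX ⟨hkY, h⟩
    rcases hkG with hkC | hkj
    · exact U_trans hS (U_of_reach hS hDS hkC.2) (U_step hS hDS hj₀step)
    · rw [Set.mem_singleton_iff] at hkj
      rw [hkj]; exact U_refl hDS j₀
  -- the semi-invariant subspace and the bad element
  set E : Submodule ℂ (Euc n) := Esub v X Y with hE
  have hsemi : SemiInvariantSub S E :=
    ⟨span ℂ (⇑v '' Y), span ℂ (⇑v '' X), closed_invariant Y hYcl, closed_invariant X hXcl,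
      span_mono (Set.image_mono hXY), rfl⟩
  set d : ℂ := ⟪(wv v X j₀), (wv v X j₀)⟫ with hd
  have hdne : d ≠ 0 := by
    rw [hd, inner_self_ne_zero]
    exact wv_ne_zero v hj₀X
  set Gfin : Finset (Fin n) := Finset.univ.filter (fun k => k ∈ Y ∧ k ∉ X) with hGfin
  obtain ⟨A, hAS, hopA⟩ := sum_units_mem hS j₀ Gfin
    (fun k hk => by
      simp only [hGfin, Finset.mem_filter, Finset.mem_univ, true_and] at hk
      exact hU k hk.1 hk.2)
    (fun k => ⟪(wv v X j₀), (wv v X k)⟫ / d)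
  -- the compression of A is the orthogonal projection onto the line spanned by (wv v X j₀)
  have hcompr : compr E A = oproj (ℂ ∙ ((wv v X j₀))) := by
    refine ContinuousLinearMap.ext fun x => ?_
    show oproj E (opOf A (oproj E x)) = oproj (ℂ ∙ ((wv v X j₀))) x
    set u : Euc n := oproj E x with hu
    have huE : u ∈ E := oproj_mem E x
    have h1 : opOf A u = ∑ k ∈ Gfin, (⟪(wv v X j₀), (wv v X k)⟫ / d) • (v.repr u k • v j₀) := by
      rw [hopA]
      simp [ContinuousLinearMap.sum_apply, ContinuousLinearMap.smul_apply, op_umat]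
    have h2 : oproj E (opOf A u) = (∑ k ∈ Gfin, (⟪(wv v X j₀), (wv v X k)⟫ / d) * v.repr u k) • (wv v X j₀) := by
      rw [h1, map_sum, Finset.sum_smul]
      refine Finset.sum_congr rfl fun k _ => ?_
      rw [_root_.map_smul, _root_.map_smul, P_v v hXY hj₀Y, smul_smul]
    have h3 : ∑ k ∈ Gfin, (⟪(wv v X j₀), (wv v X k)⟫ / d) * v.repr u k = ⟪(wv v X j₀), u⟫ / d := by
      have hexp : ⟪(wv v X j₀), u⟫ = ∑ m, v.repr u m * ⟪(wv v X j₀), (wv v X m)⟫ := by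
        conv_lhs => rw [E_expand v huE]
        rw [inner_sum]
        exact Finset.sum_congr rfl fun m _ => by rw [inner_smul_right]
      have hres : ∑ m, v.repr u m * ⟪(wv v X j₀), (wv v X m)⟫
          = ∑ m ∈ Gfin, v.repr u m * ⟪(wv v X j₀), (wv v X m)⟫ := by
        symm
        apply Finset.sum_subset (Finset.subset_univ _)
        intro m _ hm
        simp only [hGfin, Finset.mem_filter, Finset.mem_univ, true_and, not_and, not_not] at hm
        by_cases hmY : m ∈ Y
        · rw [show wv v X m = 0 from wv_of_mem v X (hm hmY)]
          simp
        · rw [repr_span v huE.1 hmY]; simp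
      rw [hexp, hres, Finset.sum_div]
      refine Finset.sum_congr rfl fun k _ => ?_
      ring
    rw [h2, h3]
    have h4 : ⟪(wv v X j₀), u⟫ = ⟪(wv v X j₀), x⟫ := by
      rw [hu]
      rw [← oproj_inner, oproj_of_mem (wv_mem_E v hXY hj₀Y)]
    rw [h4]
    show _ = (ℂ ∙ ((wv v X j₀))).subtypeL ((ℂ ∙ ((wv v X j₀))).orthogonalProjectionOnto x)
    have h5 := Submodule.starProjection_singleton (𝕜 := ℂ) (v := (wv v X j₀)) x
    show _ = (ℂ ∙ ((wv v X j₀))).starProjection x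
    rw [h5, hd, inner_self_eq_norm_sq_to_K]
    norm_num
  -- apply hereditary antisymmetry
  have hadj : compr E A = ContinuousLinearMap.adjoint (compr E A) := by
    rw [hcompr]
    exact ((isSelfAdjoint_starProjection (ℂ ∙ ((wv v X j₀)))).adjoint_eq).symm
  obtain ⟨c, hc⟩ := hHer E hsemi A hAS A hAS hadj
  rw [hcompr] at hc
  have hwj : v.repr ((wv v X j₀)) j₀ = 1 := by
    have h := repr_span v (sub_wv_mem v X j₀) hj₀X
    rw [map_sub, Finsupp.sub_apply, Module.Basis.repr_self, Finsupp.single_eq_same] at h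
    have := sub_eq_zero.mp h
    exact this.symm
  have hwi : v.repr ((wv v X i₀)) j₀ = 0 := by
    have h := repr_span v (sub_wv_mem v X i₀) hj₀X
    rw [map_sub, Finsupp.sub_apply, Module.Basis.repr_self] at h
    rw [Finsupp.single_apply, if_neg (fun he : i₀ = j₀ => hj₀ne he.symm)] at h
    have := sub_eq_zero.mp h
    exact this.symm
  have hPwi : oproj E ((wv v X i₀)) = (wv v X i₀) := oproj_of_mem (wv_mem_E v hXY hi₀Y)
  have hL : oproj (ℂ ∙ ((wv v X j₀))) ((wv v X i₀)) = (⟪(wv v X j₀), (wv v X i₀)⟫ / d) • (wv v X j₀) := by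
    show (ℂ ∙ ((wv v X j₀))).starProjection ((wv v X i₀)) = _
    rw [Submodule.starProjection_singleton, hd, inner_self_eq_norm_sq_to_K]
    norm_num
  have h6 : (⟪(wv v X j₀), (wv v X i₀)⟫ / d) • (wv v X j₀) = c • (wv v X i₀) := by
    rw [← hL, hc]
    simp [hPwi]
  have h7 := congrArg (fun y : Euc n => v.repr y j₀) h6
  simp only [_root_.map_smul, Finsupp.smul_apply, smul_eq_mul, hwj, hwi,
    mul_one, mul_zero] at h7
  have h8 : ⟪(wv v X j₀), (wv v X i₀)⟫ = 0 := by
    rcases div_eq_zero_iff.mp h7 with h | h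
    · exact h
    · exact absurd h hdne
  exact gram_ne v hv hj₀X hi₀X h8

end DvAux

/-- If `v` is an anti-orthogonal basis of `ℂⁿ`, then `𝒟_v` is a maximal hereditarily
antisymmetric operator algebra: it is hereditarily antisymmetric, and no operator algebra
properly containing it is hereditarily antisymmetric. -/
theorem Dv_maximal_herAntisym (n : ℕ) (v : Module.Basis (Fin n) ℂ (Euc n)) (hv : AntiOrth v) :
    HerAntisym (Dv v) ∧
      ∀ S : Set (Mat n), IsOpAlg S → Dv v ⊆ S → Dv v ≠ S → ¬ HerAntisym S := by
  constructor
  · exact DvAux.herAntisym_Dv v hv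
  · intro S hS hDS hne hHer
    have hex : ∃ T, T ∈ S ∧ T ∉ Dv v := by
      by_contra h
      push_neg at h
      exact hne (Set.Subset.antisymm hDS h)
    obtain ⟨T, hT, hTD⟩ := hex
    exact DvAux.not_herAntisym hv hS hDS hT hTD hHer
end
end

section
/- Let 𝒜 ⊆ Mₙ(ℂ) be an operator algebra all of whose elements are upper triangular matrices. Then there exists A ∈ 𝒜 such that every main diagonal entry of A is real, and for all indices i, j: if A_{ii} = A_{jj} then B_{ii} = B_{jj} for every B ∈ 𝒜. -/
open Matrix Polynomial

noncomputable section

/-- Step A: separating finitely many pairs by a single element of a submodule. -/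
lemma stepA {n : ℕ} (W : Submodule ℂ (Fin n → ℂ)) (F : Finset (Fin n × Fin n)) :
    (∀ p ∈ F, ∃ v ∈ W, v p.1 ≠ v p.2) → ∃ w ∈ W, ∀ p ∈ F, w p.1 ≠ w p.2 := by
  classical
  induction F using Finset.induction_on with
  | empty => exact fun _ => ⟨0, W.zero_mem, by simp⟩
  | @insert a s ha ih =>
    intro h
    obtain ⟨w, hwW, hw⟩ := ih (fun p hp => h p (Finset.mem_insert_of_mem hp))
    obtain ⟨v, hvW, hv⟩ := h a (Finset.mem_insert_self a s)
    have hsub : ∀ p ∈ insert a s, {c : ℂ | w p.1 + c * v p.1 = w p.2 + c * v p.2}.Subsingleton := by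
      intro p hp c1 h1 c2 h2
      simp only [Set.mem_setOf_eq] at h1 h2
      have key : (c1 - c2) * (v p.1 - v p.2) = 0 := by linear_combination h1 - h2
      rcases mul_eq_zero.mp key with h' | h'
      · exact sub_eq_zero.mp h'
      · exfalso
        have hv' : v p.1 = v p.2 := sub_eq_zero.mp h'
        have hw' : w p.1 = w p.2 := by linear_combination h1 - c1 * hv'
        rcases Finset.mem_insert.mp hp with rfl | hp'
        · exact hv hv'
        · exact hw p hp' hw'
    have hfin : (⋃ p ∈ (insert a s : Finset (Fin n × Fin n)),
        {c : ℂ | w p.1 + c * v p.1 = w p.2 + c * v p.2}).Finite :=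
      Set.Finite.biUnion (Finset.finite_toSet _) (fun p hp => (hsub p hp).finite)
    obtain ⟨c, hc⟩ := hfin.infinite_compl.nonempty
    refine ⟨w + c • v, W.add_mem hwW (W.smul_mem c hvW), ?_⟩
    intro p hp heq
    apply hc
    simp only [Set.mem_compl_iff, Set.mem_iUnion, not_exists, not_forall, not_not] at *
    exact ⟨p, hp, by simpa [Pi.add_apply, Pi.smul_apply, smul_eq_mul] using heq⟩

lemma pow_mem' {n : ℕ} (W : Submodule ℂ (Fin n → ℂ))
    (hmul : ∀ u ∈ W, ∀ v ∈ W, u * v ∈ W) (w : Fin n → ℂ) (hw : w ∈ W) :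
    ∀ k : ℕ, (fun i => (w i) ^ (k + 1)) ∈ W := by
  intro k
  induction k with
  | zero => simpa using hw
  | succ m ih =>
    have := hmul w hw _ ih
    convert this using 1
    funext i
    simp only [Pi.mul_apply]
    ring

lemma eval_mem' {n : ℕ} (W : Submodule ℂ (Fin n → ℂ))
    (hmul : ∀ u ∈ W, ∀ v ∈ W, u * v ∈ W) (w : Fin n → ℂ) (hw : w ∈ W)
    (p : ℂ[X]) (hp : p.coeff 0 = 0) : (fun i => p.eval (w i)) ∈ W := by
  have key : (fun i => p.eval (w i)) =
      ∑ k ∈ Finset.range (p.natDegree + 1), p.coeff k • (fun i => (w i) ^ k) := by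
    funext i
    simp only [Finset.sum_apply, Pi.smul_apply, smul_eq_mul]
    rw [Polynomial.eval_eq_sum_range]
  rw [key]
  apply Submodule.sum_mem
  intro k _
  match k with
  | 0 => simpa [hp] using W.zero_mem
  | m + 1 => exact W.smul_mem _ (pow_mem' W hmul w hw m)

/-- Main abstract lemma. -/
lemma sep_lemma {n : ℕ} (W : Submodule ℂ (Fin n → ℂ))
    (hmul : ∀ u ∈ W, ∀ v ∈ W, u * v ∈ W) :
    ∃ w ∈ W, (∀ i, (w i).im = 0) ∧ ∀ i j, w i = w j → ∀ v ∈ W, v i = v j := by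
  classical
  set F : Finset (Fin n × Fin n) :=
    Finset.univ.filter (fun p => ∃ v ∈ W, v p.1 ≠ v p.2) with hF
  obtain ⟨w, hwW, hw⟩ := stepA W F (fun p hp => (Finset.mem_filter.mp hp).2)
  set T : Finset ℂ := insert 0 (Finset.image w Finset.univ) with hT
  set E : Finset ℂ := T.erase 0 with hE
  set r : ℂ → ℂ := fun z =>
    if h : z ∈ E then (((E.equivFin ⟨z, h⟩ : Fin E.card) : ℕ) + 1 : ℕ) else 0 with hr
  have hr0 : r 0 = 0 := by
    rw [hr]
    exact dif_neg (Finset.notMem_erase 0 T)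
  have hrim : ∀ z, (r z).im = 0 := by
    intro z
    by_cases h : z ∈ E <;> simp [hr, h]
  have hrinj : ∀ z1 ∈ T, ∀ z2 ∈ T, r z1 = r z2 → z1 = z2 := by
    intro z1 h1 z2 h2 he
    by_cases c1 : z1 ∈ E <;> by_cases c2 : z2 ∈ E
    · simp only [hr, c1, c2, dif_pos] at he
      have hn : ((E.equivFin ⟨z1, c1⟩ : Fin E.card) : ℕ) + 1
          = ((E.equivFin ⟨z2, c2⟩ : Fin E.card) : ℕ) + 1 := by
        exact_mod_cast he
      have hfin : E.equivFin ⟨z1, c1⟩ = E.equivFin ⟨z2, c2⟩ := Fin.ext (by omega)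
      have := E.equivFin.injective hfin
      exact congrArg Subtype.val this
    · exfalso
      simp only [hr, dif_pos c1, dif_neg c2] at he
      have hz : ((E.equivFin ⟨z1, c1⟩ : Fin E.card) : ℕ) + 1 = 0 := by exact_mod_cast he
      omega
    · exfalso
      simp only [hr, dif_neg c1, dif_pos c2] at he
      have hz : ((E.equivFin ⟨z2, c2⟩ : Fin E.card) : ℕ) + 1 = 0 := by exact_mod_cast he.symm
      omega
    · have e1 : z1 = 0 := by
        by_contra h'
        exact c1 (Finset.mem_erase.mpr ⟨h', h1⟩)
      have e2 : z2 = 0 := by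
        by_contra h'
        exact c2 (Finset.mem_erase.mpr ⟨h', h2⟩)
      rw [e1, e2]
  set p : Polynomial ℂ := Lagrange.interpolate T id r with hp
  have hnode : ∀ z ∈ T, p.eval z = r z := by
    intro z hz
    rw [hp]
    exact Lagrange.eval_interpolate_at_node r (Function.injective_id.injOn) hz
  have hmemT : ∀ i : Fin n, w i ∈ T := by
    intro i
    exact Finset.mem_insert_of_mem (Finset.mem_image_of_mem w (Finset.mem_univ i))
  have h0T : (0 : ℂ) ∈ T := Finset.mem_insert_self 0 _
  have hp0 : p.coeff 0 = 0 := by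
    rw [Polynomial.coeff_zero_eq_eval_zero]
    rw [hnode 0 h0T, hr0]
  refine ⟨fun i => p.eval (w i), eval_mem' W hmul w hwW p hp0, ?_, ?_⟩
  · intro i
    show (p.eval (w i)).im = 0
    rw [hnode _ (hmemT i)]
    exact hrim _
  · intro i j hij v hvW
    have hij : p.eval (w i) = p.eval (w j) := hij
    by_contra hne
    have hmemF : (i, j) ∈ F := by
      rw [hF]
      exact Finset.mem_filter.mpr ⟨Finset.mem_univ _, ⟨v, hvW, hne⟩⟩
    apply hw (i, j) hmemF
    rw [hnode _ (hmemT i), hnode _ (hmemT j)] at hij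
    exact hrinj _ (hmemT i) _ (hmemT j) hij
/-- In an operator algebra of upper triangular matrices there is an element `A` with real main
diagonal entries which separates the diagonals of all other elements: if `A_{ii} = A_{jj}` then
`B_{ii} = B_{jj}` for every `B` in the algebra. -/
theorem exists_real_diagonal_separating (n : ℕ) (S : Set (Mat n)) (hS : IsOpAlg S)
    (hut : ∀ A ∈ S, ∀ i j : Fin n, j < i → A i j = 0) :
    ∃ A ∈ S, (∀ i : Fin n, (A i i).im = 0) ∧
      ∀ i j : Fin n, A i i = A j j → ∀ B ∈ S, B i i = B j j := by
  classical
  obtain ⟨h0, hadd, hsmul, hmulS⟩ := hS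
  set D : Mat n → (Fin n → ℂ) := fun A i => A i i with hD
  set W : Submodule ℂ (Fin n → ℂ) :=
    { carrier := D '' S
      add_mem' := by
        rintro _ _ ⟨A, hA, rfl⟩ ⟨B, hB, rfl⟩
        exact ⟨A + B, hadd A hA B hB, by funext i; simp [hD, Matrix.add_apply]⟩
      zero_mem' := ⟨0, h0, by funext i; simp [hD]⟩
      smul_mem' := by
        rintro c _ ⟨A, hA, rfl⟩
        exact ⟨c • A, hsmul c A hA, by funext i; simp [hD, Matrix.smul_apply]⟩ } with hW
  have hmemW : ∀ u, u ∈ W ↔ ∃ A ∈ S, D A = u := fun u => Iff.rfl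
  have hmul : ∀ u ∈ W, ∀ v ∈ W, u * v ∈ W := by
    rintro _ ⟨A, hA, rfl⟩ _ ⟨B, hB, rfl⟩
    refine ⟨A * B, hmulS A hA B hB, ?_⟩
    funext i
    show (A * B) i i = A i i * B i i
    rw [Matrix.mul_apply]
    apply Finset.sum_eq_single i
    · intro k _ hk
      rcases lt_or_gt_of_ne hk with h' | h'
      · rw [hut A hA i k h', zero_mul]
      · rw [hut B hB k i h', mul_zero]
    · intro h'; exact absurd (Finset.mem_univ i) h'
  obtain ⟨ww, hwwW, him, hsep⟩ := sep_lemma W hmul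
  obtain ⟨A, hA, hDA⟩ := (hmemW ww).mp hwwW
  refine ⟨A, hA, ?_, ?_⟩
  · intro i
    have : A i i = ww i := congrFun hDA i
    rw [this]; exact him i
  · intro i j hij B hB
    have hi : A i i = ww i := congrFun hDA i
    have hj : A j j = ww j := congrFun hDA j
    have := hsep i j (by rw [← hi, ← hj]; exact hij) (D B) ⟨B, hB, rfl⟩
    exact this
end
end
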